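/- arXiv:1209.0170 — 6 statements merged into one kernel-verified Lean document; each statement's English description precedes it below -/
import Mathlib

section
/- There exists a constant β₁ > 0, independent of the metric graph (β₁ = 6 suffices), such that the following holds. For every non-compact, connected, locally finite metric graph whose edge lengths are bounded below by some l₀ > 0, and for every nonnegative function f on the graph lying in H¹ ∩ L¹, the one-dimensional Nash inequality holds: ‖f‖_{L²}^6 ≤ β₁ · Q(f) · ‖f‖_{L¹}^4. -/
open MeasureTheory

section NashAuxSection
open MeasureTheory Set intervalIntegral

namespace NashAux


variable {V E : Type} (s t : E → V)

def GWalk : V → List E → V → Prop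
  | v, [], w => v = w
  | v, e :: l, w => (s e = v ∧ GWalk (t e) l w) ∨ (t e = v ∧ GWalk (s e) l w)

variable {s t}

lemma gwalk_append {v a w : V} {l₁ l₂ : List E} (h₁ : GWalk s t v l₁ a)
    (h₂ : GWalk s t a l₂ w) : GWalk s t v (l₁ ++ l₂) w := by
  induction l₁ generalizing v with
  | nil => cases h₁; exact h₂
  | cons e l ih =>
    rcases h₁ with ⟨he, hw⟩ | ⟨he, hw⟩
    · exact Or.inl ⟨he, ih hw⟩
    · exact Or.inr ⟨he, ih hw⟩

lemma gwalk_split {v w : V} {l₁ l₂ : List E} (h : GWalk s t v (l₁ ++ l₂) w) :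
    ∃ a, GWalk s t v l₁ a ∧ GWalk s t a l₂ w := by
  induction l₁ generalizing v with
  | nil => exact ⟨v, rfl, h⟩
  | cons e l ih =>
    rcases h with ⟨he, hw⟩ | ⟨he, hw⟩
    · rcases ih hw with ⟨a, ha₁, ha₂⟩
      exact ⟨a, Or.inl ⟨he, ha₁⟩, ha₂⟩
    · rcases ih hw with ⟨a, ha₁, ha₂⟩
      exact ⟨a, Or.inr ⟨he, ha₁⟩, ha₂⟩

lemma gwalk_of_rtg {v w : V}
    (h : Relation.ReflTransGen
      (fun a b => ∃ e, (s e = a ∧ t e = b) ∨ (s e = b ∧ t e = a)) v w) :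
    ∃ l : List E, GWalk s t v l w := by
  induction h with
  | refl => exact ⟨[], rfl⟩
  | tail _ hbc ih =>
    rcases ih with ⟨l, hl⟩
    rcases hbc with ⟨e, ⟨h1, h2⟩ | ⟨h1, h2⟩⟩
    · exact ⟨l ++ [e], gwalk_append hl (Or.inl ⟨h1, h2⟩)⟩
    · exact ⟨l ++ [e], gwalk_append hl (Or.inr ⟨h2, h1⟩)⟩

lemma exists_dup_decomp {α : Type} {l : List α} (h : ¬ l.Nodup) :
    ∃ (e : α) (l₁ l₂ l₃ : List α), l = l₁ ++ e :: (l₂ ++ e :: l₃) := by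
  induction l with
  | nil => exact absurd List.nodup_nil h
  | cons a l ih =>
    by_cases ha : a ∈ l
    · rcases List.append_of_mem ha with ⟨l₂, l₃, rfl⟩
      exact ⟨a, [], l₂, l₃, rfl⟩
    · have : ¬ l.Nodup := fun hn => h (List.nodup_cons.mpr ⟨ha, hn⟩)
      rcases ih this with ⟨e, l₁, l₂, l₃, rfl⟩
      exact ⟨e, a :: l₁, l₂, l₃, rfl⟩

lemma gwalk_nodup_aux {v w : V} :
    ∀ (n : ℕ) (l : List E), l.length ≤ n → GWalk s t v l w →
      ∃ l' : List E, l'.Nodup ∧ GWalk s t v l' w := by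
  intro n
  induction n with
  | zero =>
    intro l hl h
    rw [Nat.le_zero, List.length_eq_zero_iff] at hl
    exact ⟨l, hl ▸ List.nodup_nil, h⟩
  | succ n ih =>
    intro l hl h
    by_cases hnd : l.Nodup
    · exact ⟨l, hnd, h⟩
    · rcases exists_dup_decomp hnd with ⟨e, l₁, l₂, l₃, rfl⟩
      have hlen : l₁.length + (l₂.length + l₃.length + 2) ≤ n + 1 := by
        simp [List.length_append] at hl; omega
      rcases gwalk_split h with ⟨a, ha₁, ha₂⟩
      rcases ha₂ with ⟨he₁, hw₁⟩ | ⟨he₁, hw₁⟩ <;>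
      · rcases gwalk_split hw₁ with ⟨c, hc₁, hc₂⟩
        rcases hc₂ with ⟨he₂, hw₂⟩ | ⟨he₂, hw₂⟩
        all_goals first
          | exact ih (l₁ ++ l₃) (by simp [List.length_append]; omega)
              (gwalk_append ha₁ (by rw [← he₁]; exact hw₂))
          | exact ih (l₁ ++ e :: l₃) (by simp [List.length_append]; omega)
              (gwalk_append ha₁ (Or.inl ⟨he₁, hw₂⟩))
          | exact ih (l₁ ++ e :: l₃) (by simp [List.length_append]; omega)
              (gwalk_append ha₁ (Or.inr ⟨he₁, hw₂⟩))

lemma gwalk_nodup {v w : V} {l : List E} (h : GWalk s t v l w) :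
    ∃ l' : List E, l'.Nodup ∧ GWalk s t v l' w :=
  gwalk_nodup_aux l.length l le_rfl h



/-- Half-square identity for primitives: `T = S²/2` where `T = ∫ G·ψ`, `G v = ∫_{Ioc x v} ψ`. -/
lemma primitive_mul_self {ψ : ℝ → ℝ} {x y : ℝ} (hxy : x ≤ y)
    (hψ : IntegrableOn ψ (Ioc x y)) :
    ∫ v in Ioc x y, (∫ u in Ioc x v, ψ u) * ψ v
      = (∫ u in Ioc x y, ψ u) ^ 2 / 2 := by
  set μ := volume.restrict (Ioc x y) with hμ
  set S := ∫ u in Ioc x y, ψ u with hS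
  have hψi : Integrable ψ μ := hψ
  -- the kernel
  set W : ℝ × ℝ → ℝ := fun p => if p.1 ≤ p.2 then ψ p.1 * ψ p.2 else 0 with hW
  have hWm : AEStronglyMeasurable W (μ.prod μ) := by
    have h1 : AEStronglyMeasurable (fun p : ℝ × ℝ => ψ p.1 * ψ p.2) (μ.prod μ) :=
      (hψi.mul_prod hψi).aestronglyMeasurable
    have : W = Set.indicator {p : ℝ × ℝ | p.1 ≤ p.2} (fun p => ψ p.1 * ψ p.2) := by
      ext p
      simp [W, Set.indicator_apply, Set.mem_setOf_eq]
    rw [this]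
    exact h1.indicator (measurableSet_le measurable_fst measurable_snd)
  have hWI : Integrable W (μ.prod μ) := by
    refine ((Integrable.mul_prod hψi hψi).norm).mono' hWm ?_
    refine Filter.Eventually.of_forall fun p => ?_
    by_cases h : p.1 ≤ p.2
    · simp [W, h]
    · simp only [W, if_neg h, norm_zero]
      exact norm_nonneg _
  have swap := integral_integral_swap (f := fun u v => W (u, v)) hWI
  -- compute the two iterated integrals
  have inner1 : ∀ v ∈ Ioc x y,
      (∫ u, W (u, v) ∂μ) = (∫ u in Ioc x v, ψ u) * ψ v := by
    intro v hv
    have : (fun u => W (u, v)) = Set.indicator (Iic v) (fun u => ψ u * ψ v) := by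
      ext u; simp [W, Set.indicator_apply, Set.mem_Iic]
    rw [this, MeasureTheory.integral_indicator measurableSet_Iic, hμ,
      Measure.restrict_restrict measurableSet_Iic]
    have hset : Iic v ∩ Ioc x y = Ioc x v := by
      ext u
      simp only [Set.mem_inter_iff, Set.mem_Iic, Set.mem_Ioc]
      constructor
      · rintro ⟨h1, h2, h3⟩; exact ⟨h2, h1⟩
      · rintro ⟨h1, h2⟩; exact ⟨h2, h1, h2.trans hv.2⟩
    rw [hset, MeasureTheory.integral_mul_const]
  have inner2 : ∀ u ∈ Ioc x y,
      (∫ v, W (u, v) ∂μ) = ψ u * (S - ∫ w in Ioc x u, ψ w) := by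
    intro u hu
    have : (fun v => W (u, v)) = Set.indicator (Ici u) (fun v => ψ u * ψ v) := by
      ext v; simp [W, Set.indicator_apply, Set.mem_Ici]
    rw [this, MeasureTheory.integral_indicator measurableSet_Ici, hμ,
      Measure.restrict_restrict measurableSet_Ici]
    have hset : Ici u ∩ Ioc x y = Icc u y := by
      ext v
      simp only [Set.mem_inter_iff, Set.mem_Ici, Set.mem_Icc, Set.mem_Ioc]
      constructor
      · rintro ⟨h1, h2, h3⟩; exact ⟨h1, h3⟩
      · rintro ⟨h1, h2⟩; exact ⟨h1, hu.1.trans_le h1, h2⟩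
    rw [hset, integral_Icc_eq_integral_Ioc, MeasureTheory.integral_const_mul]
    congr 1
    have hsplit : Ioc x u ∪ Ioc u y = Ioc x y := Ioc_union_Ioc_eq_Ioc hu.1.le hu.2
    have hdisj : Disjoint (Ioc x u) (Ioc u y) := Set.Ioc_disjoint_Ioc_of_le le_rfl
    have := MeasureTheory.setIntegral_union hdisj measurableSet_Ioc
      (hψ.mono_set (by rw [← hsplit]; exact subset_union_left))
      (hψ.mono_set (by rw [← hsplit]; exact subset_union_right))
    rw [hS, ← hsplit, this]
    ring
  -- put together
  have lhs_eq : (∫ u, ∫ v, W (u, v) ∂μ ∂μ) = ∫ u in Ioc x y, ψ u * (S - ∫ w in Ioc x u, ψ w) := by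
    exact setIntegral_congr_fun measurableSet_Ioc fun u hu => inner2 u hu
  have rhs_eq : (∫ v, ∫ u, W (u, v) ∂μ ∂μ) = ∫ v in Ioc x y, (∫ u in Ioc x v, ψ u) * ψ v := by
    exact setIntegral_congr_fun measurableSet_Ioc fun v hv => inner1 v hv
  -- G is bounded and measurable, so G·ψ is integrable
  have hG_cont : ContinuousOn (fun v => ∫ u in Ioc x v, ψ u) (Icc x y) :=
    continuousOn_primitive (by rwa [integrableOn_Icc_iff_integrableOn_Ioc])
  have hG_meas : AEStronglyMeasurable (fun v => ∫ u in Ioc x v, ψ u) μ :=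
    (hG_cont.mono Ioc_subset_Icc_self).aestronglyMeasurable measurableSet_Ioc
  have hG_bdd : ∀ᵐ v ∂μ, ‖∫ u in Ioc x v, ψ u‖ ≤ ∫ u in Ioc x y, ‖ψ u‖ := by
    refine (ae_restrict_iff' measurableSet_Ioc).mpr (Filter.Eventually.of_forall fun v hv => ?_)
    calc ‖∫ u in Ioc x v, ψ u‖ ≤ ∫ u in Ioc x v, ‖ψ u‖ := norm_integral_le_integral_norm ψ
    _ ≤ ∫ u in Ioc x y, ‖ψ u‖ := by
        apply setIntegral_mono_set hψ.norm
        · exact Filter.Eventually.of_forall fun u => norm_nonneg _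
        · exact HasSubset.Subset.eventuallyLE (Ioc_subset_Ioc le_rfl hv.2)
  have hGψ : Integrable (fun v => (∫ u in Ioc x v, ψ u) * ψ v) μ :=
    Integrable.bdd_mul hψi hG_meas hG_bdd
  -- now: T = ∫ ψ u * (S - G u) = S² - T
  have key : (∫ v in Ioc x y, (∫ u in Ioc x v, ψ u) * ψ v)
      = S * S - ∫ v in Ioc x y, (∫ u in Ioc x v, ψ u) * ψ v := by
    have : ∫ u in Ioc x y, ψ u * (S - ∫ w in Ioc x u, ψ w)
        = S * S - ∫ v in Ioc x y, (∫ u in Ioc x v, ψ u) * ψ v := by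
      have expand : (fun u => ψ u * (S - ∫ w in Ioc x u, ψ w))
          = fun u => ψ u * S - (∫ w in Ioc x u, ψ w) * ψ u := funext fun u => by ring
      rw [expand, integral_sub (hψi.mul_const S) hGψ]
      rw [MeasureTheory.integral_mul_const]
    conv_lhs => rw [← rhs_eq, ← swap, lhs_eq]
    exact this
  nlinarith [key]

lemma primitive_mul_integrable {ψ : ℝ → ℝ} {x y : ℝ}
    (hψ : IntegrableOn ψ (Ioc x y)) :
    IntegrableOn (fun v => (∫ u in Ioc x v, ψ u) * ψ v) (Ioc x y) := by
  set μ := volume.restrict (Ioc x y) with hμ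
  have hψi : Integrable ψ μ := hψ
  have hG_cont : ContinuousOn (fun v => ∫ u in Ioc x v, ψ u) (Icc x y) :=
    continuousOn_primitive (by rwa [integrableOn_Icc_iff_integrableOn_Ioc])
  have hG_meas : AEStronglyMeasurable (fun v => ∫ u in Ioc x v, ψ u) μ :=
    (hG_cont.mono Ioc_subset_Icc_self).aestronglyMeasurable measurableSet_Ioc
  have hG_bdd : ∀ᵐ v ∂μ, ‖∫ u in Ioc x v, ψ u‖ ≤ ∫ u in Ioc x y, ‖ψ u‖ := by
    refine (ae_restrict_iff' measurableSet_Ioc).mpr (Filter.Eventually.of_forall fun v hv => ?_)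
    calc ‖∫ u in Ioc x v, ψ u‖ ≤ ∫ u in Ioc x v, ‖ψ u‖ := norm_integral_le_integral_norm ψ
    _ ≤ ∫ u in Ioc x y, ‖ψ u‖ := by
        apply setIntegral_mono_set hψ.norm
        · exact Filter.Eventually.of_forall fun u => norm_nonneg _
        · exact HasSubset.Subset.eventuallyLE (Ioc_subset_Ioc le_rfl hv.2)
  exact Integrable.bdd_mul hψi hG_meas hG_bdd

lemma primitive_sq_eq {ψ : ℝ → ℝ} {x y : ℝ} (hxy : x ≤ y)
    (hψ : IntegrableOn ψ (Ioc x y)) (c : ℝ) :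
    (c + ∫ u in Ioc x y, ψ u) ^ 2
      = c ^ 2 + 2 * ∫ v in Ioc x y, (c + ∫ u in Ioc x v, ψ u) * ψ v := by
  have hGψ := primitive_mul_integrable hψ
  have expand : (fun v => (c + ∫ u in Ioc x v, ψ u) * ψ v)
      = fun v => c * ψ v + (∫ u in Ioc x v, ψ u) * ψ v := funext fun v => by ring
  rw [expand, integral_add (hψ.const_mul c) hGψ, MeasureTheory.integral_const_mul,
    primitive_mul_self hxy hψ]
  ring

section Edge

variable {F φ : ℝ → ℝ} {L : ℝ}

lemma edge_integrable_phi (hmem : MemLp φ 2 (volume.restrict (Ioc (0:ℝ) L))) :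
    IntegrableOn φ (Ioc (0:ℝ) L) := by
  haveI : Fact (volume (Ioc (0:ℝ) L) < ⊤) := ⟨measure_Ioc_lt_top⟩
  exact hmem.integrable one_le_two

lemma edge_cont (hrep : ∀ x ∈ Icc (0:ℝ) L, F x = F 0 + ∫ u in (0:ℝ)..x, φ u)
    (hφ1 : IntegrableOn φ (Ioc (0:ℝ) L)) :
    ContinuousOn F (Icc (0:ℝ) L) := by
  have h1 : ContinuousOn (fun z => F 0 + ∫ t in Ioc (0:ℝ) z, φ t) (Icc (0:ℝ) L) :=
    continuousOn_const.add (continuousOn_primitive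
      (by rwa [integrableOn_Icc_iff_integrableOn_Ioc]))
  refine h1.congr fun z hz => ?_
  rw [hrep z hz, intervalIntegral.integral_of_le hz.1]

lemma edge_int_F2 (hrep : ∀ x ∈ Icc (0:ℝ) L, F x = F 0 + ∫ u in (0:ℝ)..x, φ u)
    (hφ1 : IntegrableOn φ (Ioc (0:ℝ) L)) :
    IntegrableOn (fun u => F u ^ 2) (Ioc (0:ℝ) L) := by
  exact ((edge_cont hrep hφ1).pow 2).integrableOn_Icc.mono_set Ioc_subset_Icc_self

lemma edge_bound (hrep : ∀ x ∈ Icc (0:ℝ) L, F x = F 0 + ∫ u in (0:ℝ)..x, φ u)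
    (hφ1 : IntegrableOn φ (Ioc (0:ℝ) L)) :
    ∃ C : ℝ, ∀ z ∈ Icc (0:ℝ) L, ‖F z‖ ≤ C :=
  isCompact_Icc.exists_bound_of_continuousOn (edge_cont hrep hφ1)

lemma edge_int_mul {x y : ℝ} (hsub : Ioc x y ⊆ Ioc (0:ℝ) L)
    (hrep : ∀ x ∈ Icc (0:ℝ) L, F x = F 0 + ∫ u in (0:ℝ)..x, φ u)
    (hφ1 : IntegrableOn φ (Ioc (0:ℝ) L)) (ψ : ℝ → ℝ) (hψ : IntegrableOn ψ (Ioc (0:ℝ) L)) :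
    IntegrableOn (fun u => F u * ψ u) (Ioc x y) := by
  obtain ⟨C, hC⟩ := edge_bound hrep hφ1
  refine Integrable.bdd_mul (c := C) (hψ.mono_set hsub)
    (((edge_cont hrep hφ1).mono (hsub.trans Ioc_subset_Icc_self)).aestronglyMeasurable
      measurableSet_Ioc) ?_
  refine (ae_restrict_iff' measurableSet_Ioc).mpr (Filter.Eventually.of_forall fun v hv => ?_)
  exact hC v (Ioc_subset_Icc_self (hsub hv))

lemma edge_identity (hrep : ∀ x ∈ Icc (0:ℝ) L, F x = F 0 + ∫ u in (0:ℝ)..x, φ u)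
    (hφ1 : IntegrableOn φ (Ioc (0:ℝ) L))
    {x y : ℝ} (hx : x ∈ Icc (0:ℝ) L) (hy : y ∈ Icc (0:ℝ) L) (hxy : x ≤ y) :
    F y ^ 2 = F x ^ 2 + 2 * ∫ v in Ioc x y, F v * φ v := by
  have hsub : Ioc x y ⊆ Ioc (0:ℝ) L :=
    fun u hu => ⟨lt_of_le_of_lt hx.1 hu.1, hu.2.trans hy.2⟩
  have hIx : IntervalIntegrable φ volume 0 x := by
    rw [intervalIntegrable_iff_integrableOn_Ioc_of_le hx.1]
    exact hφ1.mono_set (Ioc_subset_Ioc le_rfl hx.2)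
  have hIxy : IntervalIntegrable φ volume x y := by
    rw [intervalIntegrable_iff_integrableOn_Ioc_of_le hxy]
    exact hφ1.mono_set hsub
  have hsplit : ∀ z ∈ Icc x y, F z = F x + ∫ u in Ioc x z, φ u := by
    intro z hz
    have hzI : z ∈ Icc (0:ℝ) L := ⟨hx.1.trans hz.1, hz.2.trans hy.2⟩
    have hIxz : IntervalIntegrable φ volume x z := by
      rw [intervalIntegrable_iff_integrableOn_Ioc_of_le hz.1]
      exact hφ1.mono_set fun u hu => ⟨lt_of_le_of_lt hx.1 hu.1, hu.2.trans hzI.2⟩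
    have hadd := intervalIntegral.integral_add_adjacent_intervals hIx hIxz
    rw [hrep z hzI, hrep x hx, ← intervalIntegral.integral_of_le hz.1, ← hadd]
    ring
  have hFy : F y = F x + ∫ u in Ioc x y, φ u := hsplit y ⟨hxy, le_rfl⟩
  rw [hFy, primitive_sq_eq hxy (hφ1.mono_set hsub) (F x)]
  congr 1
  congr 1
  refine setIntegral_congr_fun measurableSet_Ioc fun v hv => ?_
  rw [← hsplit v ⟨hv.1.le, hv.2⟩]

lemma edge_two_point (hrep : ∀ x ∈ Icc (0:ℝ) L, F x = F 0 + ∫ u in (0:ℝ)..x, φ u)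
    (hpos : ∀ x ∈ Icc (0:ℝ) L, 0 ≤ F x)
    (hφ1 : IntegrableOn φ (Ioc (0:ℝ) L))
    {x y : ℝ} (hx : x ∈ Icc (0:ℝ) L) (hy : y ∈ Icc (0:ℝ) L) :
    F y ^ 2 ≤ F x ^ 2 + 2 * ∫ u in Ioc (0:ℝ) L, F u * |φ u| := by
  have habs : ∀ {a b : ℝ}, a ∈ Icc (0:ℝ) L → b ∈ Icc (0:ℝ) L → a ≤ b →
      |∫ v in Ioc a b, F v * φ v| ≤ ∫ u in Ioc (0:ℝ) L, F u * |φ u| := by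
    intro a b ha hb hab
    have hsub : Ioc a b ⊆ Ioc (0:ℝ) L :=
      fun u hu => ⟨lt_of_le_of_lt ha.1 hu.1, hu.2.trans hb.2⟩
    calc |∫ v in Ioc a b, F v * φ v| ≤ ∫ v in Ioc a b, |F v| * |φ v| := by
          simpa [Real.norm_eq_abs] using norm_integral_le_integral_norm
            (μ := volume.restrict (Ioc a b)) (fun v => F v * φ v)
    _ = ∫ v in Ioc a b, F v * |φ v| := by
        refine setIntegral_congr_fun measurableSet_Ioc fun v hv => ?_
        rw [abs_of_nonneg (hpos v (Ioc_subset_Icc_self (hsub hv)))]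
    _ ≤ ∫ u in Ioc (0:ℝ) L, F u * |φ u| := by
        refine setIntegral_mono_set
          (edge_int_mul (le_refl (Ioc (0:ℝ) L)) hrep hφ1 _ hφ1.abs) ?_ ?_
        · refine (ae_restrict_iff' measurableSet_Ioc).mpr
            (Filter.Eventually.of_forall fun v hv => ?_)
          exact mul_nonneg (hpos v (Ioc_subset_Icc_self hv)) (abs_nonneg _)
        · exact HasSubset.Subset.eventuallyLE hsub
  rcases le_total x y with hxy | hyx
  · have hid := edge_identity hrep hφ1 hx hy hxy
    have := abs_le.mp (habs hx hy hxy)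
    linarith [this.1, this.2]
  · have hid := edge_identity hrep hφ1 hy hx hyx
    have := abs_le.mp (habs hy hx hyx)
    linarith [this.1, this.2]

end Edge


lemma gwalk_telescope {V E : Type} {s t : E → V} {g : V → ℝ} {K : E → ℝ}
    (hedge : ∀ e, g (s e) ^ 2 ≤ g (t e) ^ 2 + 2 * K e ∧
      g (t e) ^ 2 ≤ g (s e) ^ 2 + 2 * K e) :
    ∀ (l : List E) (v w : V), GWalk s t v l w →
      g v ^ 2 ≤ g w ^ 2 + 2 * (l.map K).sum := by
  intro l
  induction l with
  | nil =>
    intro v w h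
    have hvw : v = w := h
    subst hvw; simp
  | cons e l ih =>
    intro v w h
    rcases h with ⟨he, hw⟩ | ⟨he, hw⟩
    · have h1 := (hedge e).1
      have h2 := ih _ _ hw
      rw [← he]
      simp only [List.map_cons, List.sum_cons]
      linarith
    · have h1 := (hedge e).2
      have h2 := ih _ _ hw
      rw [← he]
      simp only [List.map_cons, List.sum_cons]
      linarith

end NashAux

end NashAuxSection

/-- There is a constant `β₁ > 0`, independent of the metric graph
(`β₁ = 6` suffices), such that for every non-compact, connected, locally finite metric
graph with edge lengths bounded below, and every nonnegative `f ∈ H¹ ∩ L¹` on the graph,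
the one-dimensional Nash inequality `‖f‖₂⁶ ≤ β₁ · Q(f) · ‖f‖₁⁴` holds.

A metric graph is given by countable vertex/edge sets `V, E`, endpoint maps `s, t`,
and edge lengths `len e ≥ l₀ > 0`.  A function on the graph is a family
`fE e : [0, len e] → ℝ` matching a vertex function `g : V → ℝ` at the endpoints;
it is in `H¹` when each `fE e` is `H¹(0, len e)` (witnessed by the weak derivative
`fE' e`) and `Σ_e (∫ fE e² + ∫ (fE' e)²) < ∞`, and in `L¹` when `Σ_e ∫ |fE e| < ∞`.
Here `‖f‖₂² = Σ'_e ∫ (fE e)²`, `Q(f) = Σ'_e ∫ (fE' e)²`, `‖f‖₁ = Σ'_e ∫ |fE e|`. -/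
theorem nash_inequality_one_dim_metric_graph :
    ∃ β₁ : ℝ, 0 < β₁ ∧ β₁ ≤ 6 ∧
      ∀ (V E : Type) (_ : Countable V) (_ : Countable E)
        (s t : E → V) (len : E → ℝ) (l₀ : ℝ),
        0 < l₀ → (∀ e, l₀ ≤ len e) →
        -- locally finite
        (∀ v : V, {e : E | s e = v ∨ t e = v}.Finite) →
        -- connected
        (∀ v w : V,
          Relation.ReflTransGen
            (fun a b => ∃ e, (s e = a ∧ t e = b) ∨ (s e = b ∧ t e = a)) v w) →
        -- non-compact
        Infinite E →
        ∀ (fE fE' : E → ℝ → ℝ) (g : V → ℝ),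
          -- continuity at the vertices
          (∀ e, fE e 0 = g (s e)) → (∀ e, fE e (len e) = g (t e)) →
          -- nonnegativity
          (∀ e, ∀ x ∈ Set.Icc (0 : ℝ) (len e), 0 ≤ fE e x) →
          -- each edge restriction is H¹, with weak derivative fE' e ∈ L²
          (∀ e, ∀ x ∈ Set.Icc (0 : ℝ) (len e),
            fE e x = fE e 0 + ∫ u in (0 : ℝ)..x, fE' e u) →
          (∀ e, MemLp (fE' e) 2 (volume.restrict (Set.Ioc (0 : ℝ) (len e)))) →
          -- f ∈ H¹(G)
          Summable (fun e =>
            (∫ x in (0 : ℝ)..len e, (fE e x) ^ 2)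
              + ∫ x in (0 : ℝ)..len e, (fE' e x) ^ 2) →
          -- f ∈ L¹(G)
          Summable (fun e => ∫ x in (0 : ℝ)..len e, |fE e x|) →
          (∑' e, ∫ x in (0 : ℝ)..len e, (fE e x) ^ 2) ^ 3
            ≤ β₁ * (∑' e, ∫ x in (0 : ℝ)..len e, (fE' e x) ^ 2)
              * (∑' e, ∫ x in (0 : ℝ)..len e, |fE e x|) ^ 4 := by
  classical
  refine ⟨6, by norm_num, le_rfl, ?_⟩
  intro V E _ _ s t len l₀ hl₀ hlen _hlocfin hconn hinf fE fE' g hfs hft hpos hrep hmem h₁ h₂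
  set a : E → ℝ := fun e => ∫ x in (0:ℝ)..len e, fE e x ^ 2 with ha_def
  set b : E → ℝ := fun e => ∫ x in (0:ℝ)..len e, fE' e x ^ 2 with hb_def
  set c : E → ℝ := fun e => ∫ x in (0:ℝ)..len e, |fE e x| with hc_def
  have hL : ∀ e, 0 < len e := fun e => lt_of_lt_of_le hl₀ (hlen e)
  have hφ1 : ∀ e, IntegrableOn (fE' e) (Set.Ioc 0 (len e)) :=
    fun e => NashAux.edge_integrable_phi (hmem e)
  have hcont : ∀ e, ContinuousOn (fE e) (Set.Icc 0 (len e)) :=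
    fun e => NashAux.edge_cont (hrep e) (hφ1 e)
  have hF2 : ∀ e, IntegrableOn (fun u => fE e u ^ 2) (Set.Ioc 0 (len e)) :=
    fun e => NashAux.edge_int_F2 (hrep e) (hφ1 e)
  have hφ2 : ∀ e, IntegrableOn (fun u => fE' e u ^ 2) (Set.Ioc 0 (len e)) :=
    fun e => (hmem e).integrable_sq
  have hFφ : ∀ e, IntegrableOn (fun u => fE e u * |fE' e u|) (Set.Ioc 0 (len e)) :=
    fun e => NashAux.edge_int_mul (le_refl _) (hrep e) (hφ1 e) _ (hφ1 e).abs
  set K : E → ℝ := fun e => ∫ u in Set.Ioc 0 (len e), fE e u * |fE' e u| with hK_def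
  have htp : ∀ e, ∀ x ∈ Set.Icc (0:ℝ) (len e), ∀ y ∈ Set.Icc (0:ℝ) (len e),
      fE e y ^ 2 ≤ fE e x ^ 2 + 2 * K e :=
    fun e x hx y hy => NashAux.edge_two_point (hrep e) (hpos e) (hφ1 e) hx hy
  have hmem0 : ∀ e, (0:ℝ) ∈ Set.Icc (0:ℝ) (len e) :=
    fun e => Set.left_mem_Icc.mpr (hL e).le
  have hmemL : ∀ e, len e ∈ Set.Icc (0:ℝ) (len e) :=
    fun e => Set.right_mem_Icc.mpr (hL e).le
  have ha_eq : ∀ e, a e = ∫ u in Set.Ioc 0 (len e), fE e u ^ 2 :=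
    fun e => intervalIntegral.integral_of_le (hL e).le
  have hb_eq : ∀ e, b e = ∫ u in Set.Ioc 0 (len e), fE' e u ^ 2 :=
    fun e => intervalIntegral.integral_of_le (hL e).le
  have ha0 : ∀ e, 0 ≤ a e := fun e => by
    rw [ha_eq]; exact setIntegral_nonneg measurableSet_Ioc fun u _ => sq_nonneg _
  have hb0 : ∀ e, 0 ≤ b e := fun e => by
    rw [hb_eq]; exact setIntegral_nonneg measurableSet_Ioc fun u _ => sq_nonneg _
  have hc0 : ∀ e, 0 ≤ c e :=
    fun e => intervalIntegral.integral_nonneg (hL e).le fun u _ => abs_nonneg _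
  have hK0 : ∀ e, 0 ≤ K e := fun e =>
    setIntegral_nonneg measurableSet_Ioc fun u hu =>
      mul_nonneg (hpos e u ⟨hu.1.le, hu.2⟩) (abs_nonneg _)
  have h₁' : Summable (fun e => a e + b e) := by simpa only [ha_def, hb_def] using h₁
  have Sa : Summable a :=
    Summable.of_nonneg_of_le ha0 (fun e => le_add_of_nonneg_right (hb0 e)) h₁'
  have Sb : Summable b :=
    Summable.of_nonneg_of_le hb0 (fun e => le_add_of_nonneg_left (ha0 e)) h₁'
  have Sc : Summable c := h₂
  -- AM-GM per edge
  have hK2 : ∀ r : ℝ, 0 < r → ∀ e, 2 * K e ≤ r * a e + b e / r := by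
    intro r hr e
    rw [ha_eq e, hb_eq e]
    calc 2 * K e = ∫ u in Set.Ioc 0 (len e), 2 * (fE e u * |fE' e u|) := by
          rw [MeasureTheory.integral_const_mul]
    _ ≤ ∫ u in Set.Ioc 0 (len e), (r * fE e u ^ 2 + fE' e u ^ 2 / r) := by
        refine setIntegral_mono_on ((hFφ e).const_mul 2)
          (((hF2 e).const_mul r).add ((hφ2 e).div_const r)) measurableSet_Ioc
          (fun u hu => ?_)
        have hkey : (r * fE e u - |fE' e u|) ^ 2
            = r ^ 2 * fE e u ^ 2 - 2 * r * (fE e u * |fE' e u|) + fE' e u ^ 2 := by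
          rw [← sq_abs (fE' e u)]
          ring
        have h5 : 0 ≤ r ^ 2 * fE e u ^ 2 - 2 * r * (fE e u * |fE' e u|) + fE' e u ^ 2 :=
          hkey ▸ sq_nonneg _
        rw [← sub_nonneg]
        have hid : r * fE e u ^ 2 + fE' e u ^ 2 / r - 2 * (fE e u * |fE' e u|)
            = (r ^ 2 * fE e u ^ 2 - 2 * r * (fE e u * |fE' e u|) + fE' e u ^ 2) / r := by
          field_simp
          ring
        rw [hid]
        exact div_nonneg h5 hr.le
    _ = r * (∫ u in Set.Ioc 0 (len e), fE e u ^ 2)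
          + (∫ u in Set.Ioc 0 (len e), fE' e u ^ 2) / r := by
        rw [MeasureTheory.integral_add ((hF2 e).const_mul r) ((hφ2 e).div_const r),
          MeasureTheory.integral_const_mul, MeasureTheory.integral_div]
  have SK : Summable K := by
    refine Summable.of_nonneg_of_le hK0 (fun e => ?_) h₁'
    have := hK2 1 one_pos e
    have h1 : (1:ℝ) * a e + b e / 1 = a e + b e := by ring
    rw [h1] at this
    linarith [hK0 e]
  set A := ∑' e, a e with hA_def
  set B := ∑' e, b e with hB_def
  set C := ∑' e, c e with hC_def
  set D := ∑' e, K e with hD_def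
  have hA0 : 0 ≤ A := tsum_nonneg ha0
  have hB0 : 0 ≤ B := tsum_nonneg hb0
  have hC0 : 0 ≤ C := tsum_nonneg hc0
  have hD0 : 0 ≤ D := tsum_nonneg hK0
  have hD2 : ∀ r : ℝ, 0 < r → 2 * D ≤ r * A + B / r := by
    intro r hr
    calc 2 * D = ∑' e, 2 * K e := by rw [tsum_mul_left]
    _ ≤ ∑' e, (r * a e + b e / r) :=
        Summable.tsum_le_tsum (hK2 r hr) (SK.mul_left 2) ((Sa.mul_left r).add (Sb.div_const r))
    _ = r * A + B / r := by
        rw [Summable.tsum_add (Sa.mul_left r) (Sb.div_const r), tsum_mul_left, tsum_div_const]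
  -- the uniform sup bound
  have hclaim : ∀ e, ∀ x ∈ Set.Icc (0:ℝ) (len e), fE e x ^ 2 ≤ 2 * D := by
    intro e x hx
    refine le_of_forall_pos_le_add fun ε hε => ?_
    have hl₀ε : (0:ℝ) < l₀ * ε := by positivity
    obtain ⟨e', he'⟩ := (Sa.tendsto_cofinite_zero.eventually_lt_const hl₀ε).exists
    obtain ⟨q, hq, hqmin⟩ :=
      isCompact_Icc.exists_isMinOn ⟨0, hmem0 e'⟩ (hcont e')
    have hq2 : fE e' q ^ 2 < ε := by
      have hmono : ∫ _u in Set.Ioc 0 (len e'), fE e' q ^ 2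
          ≤ ∫ u in Set.Ioc 0 (len e'), fE e' u ^ 2 := by
        refine setIntegral_mono_on
          (integrableOn_const measure_Ioc_lt_top.ne) (hF2 e')
          measurableSet_Ioc (fun u hu => ?_)
        exact pow_le_pow_left₀ (hpos e' q hq)
          (isMinOn_iff.mp hqmin u ⟨hu.1.le, hu.2⟩) 2
      have hconst : ∫ _u in Set.Ioc (0:ℝ) (len e'), fE e' q ^ 2
          = len e' * fE e' q ^ 2 := by
        rw [MeasureTheory.setIntegral_const, measureReal_def, Real.volume_Ioc, smul_eq_mul, sub_zero,
          ENNReal.toReal_ofReal (hL e').le]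
      have hle : len e' * fE e' q ^ 2 ≤ a e' := by
        rw [ha_eq]; rw [hconst] at hmono; exact hmono
      have h5 := mul_le_mul_of_nonneg_right (hlen e') (sq_nonneg (fE e' q))
      nlinarith
    -- chaining through the graph
    have hKchain : ∃ S : Finset E, fE e x ^ 2 ≤ fE e' q ^ 2 + 2 * ∑ i ∈ S, K i := by
      by_cases hee' : e = e'
      · subst hee'
        exact ⟨{e}, by simpa using htp e q hq x hx⟩
      · obtain ⟨lw, hw0⟩ := NashAux.gwalk_of_rtg (hconn (s e) (s e'))
        obtain ⟨l, hlnd, hw⟩ := NashAux.gwalk_nodup hw0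
        obtain ⟨bv, l₂, hw₂, hnd₂, hel₂, hstart⟩ :
            ∃ (bv : V) (l₂ : List E), NashAux.GWalk s t bv l₂ (s e') ∧ l₂.Nodup ∧ e ∉ l₂ ∧
              fE e x ^ 2 ≤ g bv ^ 2 + 2 * K e := by
          by_cases he : e ∈ l
          · obtain ⟨l₁, l₂, rfl⟩ := List.append_of_mem he
            have hsubnd : (e :: l₂).Nodup :=
              hlnd.sublist (List.sublist_append_right l₁ (e :: l₂))
            obtain ⟨hel₂, hnd₂⟩ := List.nodup_cons.mp hsubnd
            obtain ⟨u, _hu₁, hu₂⟩ := NashAux.gwalk_split hw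
            rcases hu₂ with ⟨_heu, hwu⟩ | ⟨_heu, hwu⟩
            · refine ⟨t e, l₂, hwu, hnd₂, hel₂, ?_⟩
              have := htp e (len e) (hmemL e) x hx
              rwa [hft e] at this
            · refine ⟨s e, l₂, hwu, hnd₂, hel₂, ?_⟩
              have := htp e 0 (hmem0 e) x hx
              rwa [hfs e] at this
          · refine ⟨s e, l, hw, hlnd, he, ?_⟩
            have := htp e 0 (hmem0 e) x hx
            rwa [hfs e] at this
        obtain ⟨cv, m₁, hwm, hndm, hem, he'm, hend⟩ :
            ∃ (cv : V) (m₁ : List E), NashAux.GWalk s t bv m₁ cv ∧ m₁.Nodup ∧ e ∉ m₁ ∧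
              e' ∉ m₁ ∧ g cv ^ 2 ≤ fE e' q ^ 2 + 2 * K e' := by
          by_cases he' : e' ∈ l₂
          · obtain ⟨m₁, m₂, rfl⟩ := List.append_of_mem he'
            have hndapp := List.nodup_append.mp hnd₂
            have hndm : m₁.Nodup := hndapp.1
            have he'm : e' ∉ m₁ := fun h => hndapp.2.2 e' h e' List.mem_cons_self rfl
            have hem : e ∉ m₁ := fun h => hel₂ (List.mem_append.mpr (Or.inl h))
            obtain ⟨u, hu₁, hu₂⟩ := NashAux.gwalk_split hw₂
            rcases hu₂ with ⟨heu, _⟩ | ⟨heu, _⟩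
            · refine ⟨u, m₁, hu₁, hndm, hem, he'm, ?_⟩
              have := htp e' q hq 0 (hmem0 e')
              rwa [hfs e', heu] at this
            · refine ⟨u, m₁, hu₁, hndm, hem, he'm, ?_⟩
              have := htp e' q hq (len e') (hmemL e')
              rwa [hft e', heu] at this
          · refine ⟨s e', l₂, hw₂, hnd₂, hel₂, he', ?_⟩
            have := htp e' q hq 0 (hmem0 e')
            rwa [hfs e'] at this
        have hedge : ∀ i, g (s i) ^ 2 ≤ g (t i) ^ 2 + 2 * K i ∧
            g (t i) ^ 2 ≤ g (s i) ^ 2 + 2 * K i := by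
          intro i
          constructor
          · have := htp i (len i) (hmemL i) 0 (hmem0 i)
            rwa [hfs i, hft i] at this
          · have := htp i 0 (hmem0 i) (len i) (hmemL i)
            rwa [hfs i, hft i] at this
        have htel := NashAux.gwalk_telescope hedge m₁ bv cv hwm
        refine ⟨insert e (insert e' m₁.toFinset), ?_⟩
        rw [Finset.sum_insert (by
            simp only [Finset.mem_insert, List.mem_toFinset]
            push_neg
            exact ⟨hee', hem⟩),
          Finset.sum_insert (by simpa using he'm),
          List.sum_toFinset K hndm]
        linarith
    obtain ⟨S, hS⟩ := hKchain
    have hSD : ∑ i ∈ S, K i ≤ D := Summable.sum_le_tsum S (fun i _ => hK0 i) SK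
    linarith
  -- from sup bound to the Nash inequality
  have hFle : ∀ e, ∀ x ∈ Set.Icc (0:ℝ) (len e), fE e x ≤ Real.sqrt (2 * D) := by
    intro e x hx
    have h := hclaim e x hx
    have h2 := Real.sqrt_le_sqrt h
    rwa [Real.sqrt_sq (hpos e x hx)] at h2
  have hac : ∀ e, a e ≤ Real.sqrt (2 * D) * c e := by
    intro e
    have hint1 : IntervalIntegrable (fun x => fE e x ^ 2) volume 0 (len e) :=
      (intervalIntegrable_iff_integrableOn_Ioc_of_le (hL e).le).mpr (hF2 e)
    have hint2 : IntervalIntegrable (fun x => Real.sqrt (2 * D) * |fE e x|)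
        volume 0 (len e) := by
      apply ContinuousOn.intervalIntegrable
      rw [Set.uIcc_of_le (hL e).le]
      exact continuousOn_const.mul (hcont e).abs
    have hmono := intervalIntegral.integral_mono_on (hL e).le hint1 hint2 (fun u hu => by
      rw [abs_of_nonneg (hpos e u hu)]
      have h5 := hFle e u hu
      have h6 := hpos e u hu
      nlinarith)
    calc a e ≤ ∫ x in (0:ℝ)..len e, Real.sqrt (2 * D) * |fE e x| := hmono
    _ = Real.sqrt (2 * D) * c e := intervalIntegral.integral_const_mul _ _
  have hAC : A ≤ Real.sqrt (2 * D) * C := by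
    calc A ≤ ∑' e, Real.sqrt (2 * D) * c e :=
        Summable.tsum_le_tsum hac Sa (Sc.mul_left _)
    _ = Real.sqrt (2 * D) * C := tsum_mul_left
  have hA2 : A ^ 2 ≤ 2 * D * C ^ 2 := by
    have h2 := pow_le_pow_left₀ hA0 hAC 2
    rwa [mul_pow, Real.sq_sqrt (by linarith : (0:ℝ) ≤ 2 * D)] at h2
  by_cases hA : A = 0
  · rw [hA]
    have : (0:ℝ) ≤ 6 * B * C ^ 4 :=
      mul_nonneg (mul_nonneg (by norm_num) hB0) (pow_nonneg hC0 4)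
    nlinarith
  · have hApos : 0 < A := hA0.lt_of_ne (Ne.symm hA)
    have hCpos : 0 < C := by
      rcases hC0.lt_or_eq with h | h
      · exact h
      · exfalso
        rw [← h, mul_zero] at hAC
        linarith
    have ht0 : 0 < A / (2 * C ^ 2) := by positivity
    have h2D := hD2 (A / (2 * C ^ 2)) ht0
    have hfinal : A ^ 2 ≤ ((A / (2 * C ^ 2)) * A + B / (A / (2 * C ^ 2))) * C ^ 2 :=
      le_trans hA2 (mul_le_mul_of_nonneg_right h2D (sq_nonneg C))
    have e1 : (A / (2 * C ^ 2)) * A * C ^ 2 = A ^ 2 / 2 := by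
      field_simp
    have e2 : (B / (A / (2 * C ^ 2))) * C ^ 2 = 2 * B * C ^ 4 / A := by
      field_simp
    have hexp : ((A / (2 * C ^ 2)) * A + B / (A / (2 * C ^ 2))) * C ^ 2
        = (A / (2 * C ^ 2)) * A * C ^ 2 + (B / (A / (2 * C ^ 2))) * C ^ 2 := by ring
    rw [hexp, e1, e2] at hfinal
    have hhalf : A ^ 2 / 2 ≤ 2 * B * C ^ 4 / A := by linarith
    have h3 : A ^ 3 / 2 ≤ 2 * B * C ^ 4 := by
      calc A ^ 3 / 2 = A * (A ^ 2 / 2) := by ring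
      _ ≤ A * (2 * B * C ^ 4 / A) := mul_le_mul_of_nonneg_left hhalf hApos.le
      _ = 2 * B * C ^ 4 := by field_simp
    have hBC : 0 ≤ B * C ^ 4 := mul_nonneg hB0 (pow_nonneg hC0 4)
    linarith
end

section
/- If f : [0,l] → ℝ is measurable, nonnegative and square-integrable, and k ≥ 0, then ∫_Δ F(x,y)² dxdy ≥ (r/4)·∫₀^l f(x)² dx. -/
open MeasureTheory

/-- The closed triangle with vertices `(0,0)`, `(l,0)`, `(d,r)`:
`Δ = {(x,y) : 0 ≤ y ≤ r and (d/r)·y ≤ x ≤ l − ((l−d)/r)·y}`. -/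
def triangleSet (r l d : ℝ) : Set (ℝ × ℝ) :=
  {p : ℝ × ℝ | 0 ≤ p.2 ∧ p.2 ≤ r ∧ (d / r) * p.2 ≤ p.1 ∧ p.1 ≤ l - ((l - d) / r) * p.2}

/-- The extension `F` of `f : [0,l] → ℝ` to the triangle `Δ`:
`F(x,y) = (1 − y/r)·f((x − (d/r)y)/(1 − y/r)) + (k/r)·y` for `y < r`, and `F(x,r) = k`. -/
noncomputable def triangleExt (r d k : ℝ) (f : ℝ → ℝ) (p : ℝ × ℝ) : ℝ :=
  if p.2 = r then k
  else (1 - p.2 / r) * f ((p.1 - (d / r) * p.2) / (1 - p.2 / r)) + (k / r) * p.2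

/-- If `f : [0,l] → ℝ` is measurable, nonnegative and square-integrable,
and `k ≥ 0`, then `∫_Δ F(x,y)² dxdy ≥ (r/4)·∫₀ˡ f(x)² dx`. -/
theorem triangleExt_sq_integral_lower_bound (r l d : ℝ) (hr : 0 < r) (hl : 0 < l)
    (hd0 : 0 ≤ d) (hdl : d ≤ l) (f : ℝ → ℝ) (hf_meas : Measurable f)
    (hf_nonneg : ∀ x ∈ Set.Icc (0 : ℝ) l, 0 ≤ f x)
    (hf_sq : MemLp f 2 (volume.restrict (Set.Ioc (0 : ℝ) l)))
    (k : ℝ) (hk : 0 ≤ k) :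
    r / 4 * ∫ x in (0 : ℝ)..l, (f x) ^ 2
      ≤ ∫ p in triangleSet r l d, (triangleExt r d k f p) ^ 2 := by
  set Δ := triangleSet r l d with hΔ
  set C : ℝ := ∫ x in (0 : ℝ)..l, (f x) ^ 2 with hCdef
  set g : ℝ × ℝ → ℝ :=
    fun p => (1 - p.2 / r) ^ 2 * f ((p.1 - (d / r) * p.2) / (1 - p.2 / r)) ^ 2 with hg
  set G : ℝ × ℝ → ℝ := Δ.indicator g with hG
  -- basic facts
  have hΔmeas : MeasurableSet Δ := by
    apply MeasurableSet.inter
    · exact measurableSet_le measurable_const measurable_snd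
    apply MeasurableSet.inter
    · exact measurableSet_le measurable_snd measurable_const
    apply MeasurableSet.inter
    · exact measurableSet_le (measurable_snd.const_mul _) measurable_fst
    · exact measurableSet_le measurable_fst (measurable_const.sub (measurable_snd.const_mul _))
  have hgmeas : Measurable g :=
    ((measurable_const.sub (measurable_snd.div_const r)).pow_const 2).mul
      ((hf_meas.comp ((measurable_fst.sub (measurable_snd.const_mul _)).div
        (measurable_const.sub (measurable_snd.div_const r)))).pow_const 2)
  have hGmeas : Measurable G := hgmeas.indicator hΔmeas
  have hgnonneg : ∀ p, 0 ≤ g p := fun p => mul_nonneg (sq_nonneg _) (sq_nonneg _)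
  have hGnonneg : ∀ p, 0 ≤ G p := fun p => Set.indicator_nonneg (fun q _ => hgnonneg q) p
  have hfsq_int : IntervalIntegrable (fun x => f x ^ 2) volume 0 l := by
    rw [intervalIntegrable_iff_integrableOn_Ioc_of_le hl.le]
    exact hf_sq.integrable_sq
  have hC : (0:ℝ) ≤ C :=
    intervalIntegral.integral_nonneg hl.le (fun x _ => sq_nonneg _)
  -- slice description
  have hslice : ∀ y : ℝ, y ∈ Set.Icc (0:ℝ) r → ∀ x : ℝ,
      G (x, y) = Set.indicator (Set.Icc ((d/r)*y) (l - ((l-d)/r)*y))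
        (fun x => (1 - y / r) ^ 2 * f ((x - (d / r) * y) / (1 - y / r)) ^ 2) x := by
    intro y hy x
    by_cases hmem : x ∈ Set.Icc ((d/r)*y) (l - ((l-d)/r)*y)
    · rw [Set.indicator_of_mem hmem, hG, Set.indicator_of_mem (show (x,y) ∈ Δ from ⟨hy.1, hy.2, hmem.1, hmem.2⟩)]
    · rw [Set.indicator_of_notMem hmem, hG, Set.indicator_of_notMem]
      intro h
      exact hmem ⟨h.2.2.1, h.2.2.2⟩
  have hslice0 : ∀ y : ℝ, y ∉ Set.Icc (0:ℝ) r → ∀ x : ℝ, G (x, y) = 0 := by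
    intro y hy x
    apply Set.indicator_of_notMem
    intro hmem
    exact hy ⟨hmem.1, hmem.2.1⟩
  have hcb : ∀ y : ℝ, y ∈ Set.Icc (0:ℝ) r → (d/r)*y ≤ l - ((l-d)/r)*y := by
    intro y hy
    have h1 : (d/r)*y + ((l-d)/r)*y = (l/r)*y := by ring
    have h2 : (l/r)*y ≤ l := by
      calc (l/r)*y ≤ (l/r)*r := mul_le_mul_of_nonneg_left hy.2 (div_nonneg hl.le hr.le)
      _ = l := div_mul_cancel₀ l hr.ne'
    linarith
  -- slice integral computation
  have hinner : ∀ y : ℝ, (∫ x, G (x, y)) =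
      Set.indicator (Set.Icc (0:ℝ) r) (fun y => (1 - y / r) ^ 3 * C) y := by
    intro y
    by_cases hy : y ∈ Set.Icc (0:ℝ) r
    · rw [Set.indicator_of_mem hy]
      rcases eq_or_lt_of_le hy.2 with hyr | hyr
      · have hs0 : 1 - y / r = 0 := by rw [hyr, div_self hr.ne', sub_self]
        have hz : (fun x : ℝ => G (x, y)) = fun _ => (0:ℝ) := by
          funext x
          rw [hslice y hy x]
          simp [Set.indicator_apply, hs0]
        rw [hz, integral_zero, hs0]
        ring
      · have hs : 0 < 1 - y / r := by
          rw [sub_pos, div_lt_one hr]; exact hyr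
        rw [show (fun x : ℝ => G (x, y)) = _ from funext (hslice y hy)]
        rw [integral_indicator measurableSet_Icc, integral_Icc_eq_integral_Ioc,
          ← intervalIntegral.integral_of_le (hcb y hy), intervalIntegral.integral_const_mul]
        have e1 : (∫ x in ((d/r)*y)..(l - ((l-d)/r)*y), f ((x - (d/r)*y)/(1 - y/r)) ^ 2)
            = ∫ x in ((d/r)*y - (d/r)*y)..((l - ((l-d)/r)*y) - (d/r)*y), f (x/(1 - y/r)) ^ 2 :=
          intervalIntegral.integral_comp_sub_right (fun t => f (t/(1 - y/r)) ^ 2) _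
        have hb : (l - ((l-d)/r)*y) - (d/r)*y = l * (1 - y/r) := by field_simp; ring
        rw [e1, sub_self, hb,
          intervalIntegral.integral_comp_div (f := fun t => f t ^ 2) hs.ne',
          zero_div, mul_div_cancel_right₀ l hs.ne', smul_eq_mul]
        ring
    · rw [Set.indicator_of_notMem hy,
        show (fun x : ℝ => G (x, y)) = fun _ => (0:ℝ) from funext (hslice0 y hy), integral_zero]
  -- slice integrability
  have hsliceint : ∀ y : ℝ, Integrable (fun x => G (x, y)) volume := by
    intro y
    by_cases hy : y ∈ Set.Icc (0:ℝ) r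
    · rcases eq_or_lt_of_le hy.2 with hyr | hyr
      · have hs0 : 1 - y / r = 0 := by rw [hyr, div_self hr.ne', sub_self]
        have hz : (fun x : ℝ => G (x, y)) = fun _ => (0:ℝ) := by
          funext x
          rw [hslice y hy x]
          simp [Set.indicator_apply, hs0]
        rw [hz]
        exact integrable_zero _ _ _
      · have hs : 0 < 1 - y / r := by
          rw [sub_pos, div_lt_one hr]; exact hyr
        rw [show (fun x : ℝ => G (x, y)) = _ from funext (hslice y hy),
          integrable_indicator_iff measurableSet_Icc]
        have I1 : IntervalIntegrable (fun x => f (x * (1 - y/r)⁻¹) ^ 2) volume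
            (0/(1 - y/r)⁻¹) (l/(1 - y/r)⁻¹) :=
          IntervalIntegrable.comp_mul_right hfsq_int (c := _)
        rw [zero_div, show l / (1 - y/r)⁻¹ = l * (1 - y/r) by field_simp] at I1
        have I2 := I1.comp_sub_right ((d/r)*y)
        have hb : l * (1 - y/r) + (d/r)*y = l - ((l-d)/r)*y := by field_simp; ring
        rw [zero_add, hb] at I2
        have hfe : (fun x => f ((x - (d/r)*y) * (1 - y/r)⁻¹) ^ 2)
            = fun x => f ((x - (d/r)*y)/(1 - y/r)) ^ 2 := by
          funext x; simp only [div_eq_mul_inv]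
        rw [hfe] at I2
        have II := I2.const_mul ((1 - y/r)^2)
        rw [intervalIntegrable_iff_integrableOn_Icc_of_le (hcb y hy)] at II
        exact II
    · rw [show (fun x : ℝ => G (x, y)) = fun _ => (0:ℝ) from funext (hslice0 y hy)]
      exact integrable_zero _ _ _
  -- integrability of G
  have hGint : Integrable G volume := by
    rw [MeasureTheory.Measure.volume_eq_prod]
    refine (integrable_prod_iff' ?_).2 ⟨Filter.Eventually.of_forall hsliceint, ?_⟩
    · rw [← MeasureTheory.Measure.volume_eq_prod]; exact hGmeas.aestronglyMeasurable
    · have : (fun y => ∫ x, ‖G (x, y)‖) = fun y =>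
          Set.indicator (Set.Icc (0:ℝ) r) (fun y => (1 - y / r) ^ 3 * C) y := by
        funext y
        rw [show (fun x => ‖G (x, y)‖) = fun x => G (x, y) from
          funext fun x => Real.norm_of_nonneg (hGnonneg _), hinner y]
      rw [this]
      rw [integrable_indicator_iff measurableSet_Icc]
      exact Continuous.integrableOn_Icc (((continuous_const.sub (continuous_id.div_const r)).pow 3).mul continuous_const)
  -- value of the integral of G
  have hGval : ∫ p, G p = r / 4 * C := by
    rw [MeasureTheory.Measure.volume_eq_prod, integral_prod_symm _ (by rw [← MeasureTheory.Measure.volume_eq_prod]; exact hGint)]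
    simp only [hinner]
    rw [integral_indicator measurableSet_Icc, integral_Icc_eq_integral_Ioc,
      ← intervalIntegral.integral_of_le hr.le]
    have h1 : (∫ y in (0:ℝ)..r, (1 - y / r) ^ 3 * C) = (∫ y in (0:ℝ)..r, (1 - y / r) ^ 3) * C :=
      intervalIntegral.integral_mul_const _ _
    have h2 : (∫ y in (0:ℝ)..r, (1 - y / r) ^ 3) = r / 4 := by
      have := intervalIntegral.integral_comp_div (a := (0:ℝ)) (b := r)
        (f := fun t => (1 - t) ^ 3) (c := r) hr.ne'
      rw [this, zero_div, div_self hr.ne']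
      have h3 := intervalIntegral.integral_comp_sub_left (a := (0:ℝ)) (b := 1)
        (f := fun u => u ^ 3) 1
      simp only [sub_zero, sub_self] at h3
      rw [h3, integral_pow]
      norm_num
      ring
    rw [h1, h2]
  -- pointwise bounds on Δ
  have hpoint : ∀ p ∈ Δ, g p ≤ (triangleExt r d k f p) ^ 2 ∧
      (triangleExt r d k f p) ^ 2 ≤ 2 * g p + 2 * k ^ 2 := by
    rintro ⟨x, y⟩ ⟨h1, h2, h3, h4⟩
    by_cases hyr : y = r
    · have hs0 : 1 - y / r = 0 := by rw [hyr, div_self hr.ne', sub_self]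
      have hgz : g (x, y) = 0 := by
        simp only [hg]
        rw [show (1 - (x, y).2 / r) = 0 from hs0]
        ring
      have hFk : triangleExt r d k f (x, y) = k := by
        simp only [triangleExt]
        rw [if_pos hyr]
      rw [hgz, hFk]
      constructor
      · nlinarith [sq_nonneg k]
      · nlinarith [sq_nonneg k]
    · have hylt : y < r := lt_of_le_of_ne h2 hyr
      have hs : 0 < 1 - y / r := by rw [sub_pos, div_lt_one hr]; exact hylt
      set u : ℝ := (x - (d/r)*y)/(1 - y/r) with hu
      have hu0 : 0 ≤ u := div_nonneg (by linarith) hs.le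
      have hul : u ≤ l := by
        rw [hu, div_le_iff₀ hs]
        have hbb : l - ((l-d)/r)*y - (d/r)*y = l * (1 - y/r) := by field_simp; ring
        linarith
      have hfu : 0 ≤ f u := hf_nonneg u ⟨hu0, hul⟩
      have hA : 0 ≤ (1 - y/r) * f u := mul_nonneg hs.le hfu
      have hB : 0 ≤ (k/r)*y := mul_nonneg (div_nonneg hk hr.le) h1
      have hBk : (k/r)*y ≤ k := by
        calc (k/r)*y ≤ (k/r)*r := mul_le_mul_of_nonneg_left h2 (div_nonneg hk hr.le)
        _ = k := div_mul_cancel₀ k hr.ne'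
      have hF : triangleExt r d k f (x, y) = (1 - y/r) * f u + (k/r)*y := by
        simp only [triangleExt]
        rw [if_neg hyr]
      have hgv : g (x, y) = ((1 - y/r) * f u) ^ 2 := by
        simp only [hg, hu]
        ring
      rw [hF, hgv]
      set A := (1 - y/r) * f u with hAdef
      set B := (k/r)*y with hBdef
      have e1 : (A + B)^2 = A^2 + 2*(A*B) + B^2 := by ring
      have e2 : (A + B)^2 = 2*A^2 + 2*B^2 - (A - B)^2 := by ring
      have hB2 : B^2 ≤ k^2 := pow_le_pow_left₀ hB hBk 2
      constructor
      · linarith [mul_nonneg hA hB, sq_nonneg B]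
      · linarith [sq_nonneg (A - B)]
  -- integrability of F^2 on Δ
  have hFmeas : Measurable (fun p => (triangleExt r d k f p) ^ 2) := by
    apply Measurable.pow_const
    apply Measurable.ite
    · exact measurable_snd (measurableSet_singleton r)
    · exact measurable_const
    · exact ((measurable_const.sub (measurable_snd.div_const r)).mul
        (hf_meas.comp ((measurable_fst.sub (measurable_snd.const_mul _)).div
          (measurable_const.sub (measurable_snd.div_const r))))).add (measurable_snd.const_mul _)
  have hΔfin : volume Δ < ⊤ := by
    have hsub : Δ ⊆ Set.Icc ((0:ℝ),(0:ℝ)) (l, r) := by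
      rintro ⟨x, y⟩ ⟨h1, h2, h3, h4⟩
      have hx0 : 0 ≤ x := le_trans (by positivity) h3
      have hx1 : x ≤ l := by
        have : 0 ≤ ((l-d)/r)*y := mul_nonneg (div_nonneg (by linarith) hr.le) h1
        linarith
      exact ⟨⟨hx0, h1⟩, ⟨hx1, h2⟩⟩
    exact lt_of_le_of_lt (measure_mono hsub) isCompact_Icc.measure_lt_top
  have hbound_int : IntegrableOn (fun p => 2 * g p + 2 * k ^ 2) Δ volume := by
    refine Integrable.add ?_ ?_
    · exact ((integrable_indicator_iff hΔmeas).1 hGint).const_mul 2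
    · exact (integrableOn_const hΔfin.ne)
  have hF2int : IntegrableOn (fun p => (triangleExt r d k f p) ^ 2) Δ volume := by
    refine Integrable.mono' hbound_int hFmeas.aestronglyMeasurable ?_
    rw [ae_restrict_iff' hΔmeas]
    refine Filter.Eventually.of_forall (fun p hp => ?_)
    rw [Real.norm_of_nonneg (sq_nonneg _)]
    exact (hpoint p hp).2
  -- a.e. lower bound
  have hglow : ∀ᵐ p ∂(volume.restrict Δ), g p ≤ (triangleExt r d k f p) ^ 2 := by
    rw [ae_restrict_iff' hΔmeas]
    exact Filter.Eventually.of_forall (fun p hp => (hpoint p hp).1)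
  calc r / 4 * C = ∫ p, G p := hGval.symm
    _ = ∫ p in Δ, g p := integral_indicator hΔmeas
    _ ≤ ∫ p in Δ, (triangleExt r d k f p) ^ 2 :=
        integral_mono_ae ((integrable_indicator_iff hΔmeas).1 hGint) hF2int hglow
end

section
/- If f : [0,l] → ℝ is integrable, then ∫_Δ F(x,y) dxdy = (r/3)·∫₀^l f(x) dx + (1/6)·l·k·r. In particular, if f ≥ 0 and 0 ≤ k ≤ (∫₀^l f)/l, then ∫_Δ |F(x,y)| dxdy ≤ (r/2)·∫₀^l f(x) dx. -/
open MeasureTheory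

noncomputable section TriAux

variable (r l d : ℝ)

def triPhi (p : ℝ × ℝ) : ℝ × ℝ := ((d / r) * p.2 + (1 - p.2 / r) * p.1, p.2)

def triA (p : ℝ × ℝ) : ℝ × ℝ →L[ℝ] ℝ × ℝ :=
  ((1 - p.2 / r) • ContinuousLinearMap.fst ℝ ℝ ℝ
    + ((d - p.1) / r) • ContinuousLinearMap.snd ℝ ℝ ℝ).prod (ContinuousLinearMap.snd ℝ ℝ ℝ)

lemma triPhi_hasFDerivAt (p : ℝ × ℝ) : HasFDerivAt (triPhi r d) (triA r d p) p := by
  have h1 := ((hasFDerivAt_snd (𝕜 := ℝ) (p := p)).const_mul (d/r)).add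
    (((hasFDerivAt_const (1:ℝ) p).sub ((hasFDerivAt_snd (𝕜 := ℝ) (p := p)).mul_const r⁻¹)).mul
      (hasFDerivAt_fst (𝕜 := ℝ) (p := p)))
  have h2 := h1.prodMk (hasFDerivAt_snd (𝕜 := ℝ) (p := p))
  refine h2.congr_fderiv ?_
  apply ContinuousLinearMap.ext
  intro v
  simp [triA, ContinuousLinearMap.prod_apply, ContinuousLinearMap.smulRight_apply]
  ring

lemma triA_det (p : ℝ × ℝ) : (triA r d p).det = 1 - p.2 / r := by
  have : (triA r d p).det = LinearMap.det ((triA r d p) : ℝ × ℝ →ₗ[ℝ] ℝ × ℝ) := rfl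
  rw [this, ← LinearMap.det_toMatrix (Module.Basis.finTwoProd ℝ), Matrix.det_fin_two]
  simp [LinearMap.toMatrix_apply, Module.Basis.finTwoProd_zero, Module.Basis.finTwoProd_one,
    Module.Basis.coe_finTwoProd_repr, triA]

end TriAux


section TriAux2
variable (r l d : ℝ)

lemma tri_image (hr : 0 < r) :
    triPhi r d '' (Set.Icc (0:ℝ) l ×ˢ Set.Ico (0:ℝ) r) = triangleSet r l d \ {((d : ℝ), r)} := by
  ext ⟨x, y⟩
  simp only [Set.mem_image, Set.mem_prod, Set.mem_Icc, Set.mem_Ico, Set.mem_diff,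
    Set.mem_singleton_iff, triangleSet, Set.mem_setOf_eq, triPhi, Prod.mk.injEq, Prod.exists]
  constructor
  · rintro ⟨u, yy, ⟨⟨hu0, hul⟩, hy0, hyr⟩, hx, rfl⟩
    have ht : 0 < 1 - yy / r := by rw [sub_pos, div_lt_one hr]; exact hyr
    have hkey : (d / r) * yy + (1 - yy / r) * l = l - (l - d) / r * yy := by
      field_simp; ring
    refine ⟨⟨hy0, hyr.le, by nlinarith, by nlinarith⟩, ?_⟩
    rintro ⟨-, rfl⟩
    exact absurd rfl (ne_of_lt hyr)
  · rintro ⟨⟨hy0, hyr, hx1, hx2⟩, hne⟩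
    have hyr' : y < r := by
      rcases lt_or_eq_of_le hyr with h | h
      · exact h
      · exfalso
        subst h
        have h1 : d / y * y = d := by field_simp
        have h2 : l - (l - d) / y * y = d := by field_simp; ring
        exact hne ⟨le_antisymm (h2 ▸ hx2) (h1 ▸ hx1), rfl⟩
    have ht : 0 < 1 - y / r := by rw [sub_pos, div_lt_one hr]; exact hyr'
    refine ⟨(x - (d / r) * y) / (1 - y / r), y, ⟨⟨?_, ?_⟩, hy0, hyr'⟩, ?_, rfl⟩
    · exact div_nonneg (by linarith) ht.le
    · rw [div_le_iff₀ ht]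
      have hkey : l * (1 - y / r) = l - (l - d) / r * y - (d / r) * y := by
        field_simp; ring
      linarith
    · rw [mul_div_cancel₀ _ (ne_of_gt ht)]; ring

lemma tri_injOn (hr : 0 < r) :
    Set.InjOn (triPhi r d) (Set.Icc (0:ℝ) l ×ˢ Set.Ico (0:ℝ) r) := by
  rintro ⟨u, y⟩ ⟨hu, hy⟩ ⟨u', y'⟩ ⟨hu', hy'⟩ heq
  simp only [triPhi, Prod.mk.injEq] at heq
  obtain ⟨h1, rfl⟩ := heq
  have hyr : y < r := hy.2
  have ht : 0 < 1 - y / r := by rw [sub_pos, div_lt_one hr]; exact hyr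
  have : u = u' := mul_left_cancel₀ (ne_of_gt ht) (by linarith)
  simp [this]

lemma tri_cov (hr : 0 < r) (g : ℝ × ℝ → ℝ) :
    ∫ p in triangleSet r l d, g p
      = ∫ p in Set.Icc (0:ℝ) l ×ˢ Set.Ico (0:ℝ) r, (1 - p.2 / r) * g (triPhi r d p) := by
  have hs : MeasurableSet (Set.Icc (0:ℝ) l ×ˢ Set.Ico (0:ℝ) r) :=
    measurableSet_Icc.prod measurableSet_Ico
  have hcov := integral_image_eq_integral_abs_det_fderiv_smul volume hs
    (fun p _ => (triPhi_hasFDerivAt r d p).hasFDerivWithinAt) (tri_injOn r l d hr) g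
  rw [tri_image r l d hr] at hcov
  have hnull : volume ({((d : ℝ), r)} : Set (ℝ × ℝ)) = 0 := by
    rw [← Set.singleton_prod_singleton, Measure.volume_eq_prod, Measure.prod_prod,
      Real.volume_singleton, Real.volume_singleton, mul_zero]
  rw [setIntegral_congr_set (diff_ae_eq_self.2 (measure_mono_null Set.inter_subset_right hnull))]
    at hcov
  rw [hcov]
  refine setIntegral_congr_fun hs fun p hp => ?_
  have hyr : p.2 < r := hp.2.2
  have ht : (0:ℝ) ≤ 1 - p.2 / r := by
    rw [sub_nonneg, div_le_one hr]; exact hyr.le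
  rw [triA_det, abs_of_nonneg ht, smul_eq_mul]

end TriAux2

section TriAux3

lemma tri_poly_int (a b c R : ℝ) :
    ∫ y in (0:ℝ)..R, (a + b * y + c * y ^ 2) = a * R + b * R ^ 2 / 2 + c * R ^ 3 / 3 := by
  have h1 : IntervalIntegrable (fun _ : ℝ => a) volume 0 R := intervalIntegrable_const
  have h2 : IntervalIntegrable (fun y : ℝ => b * y) volume 0 R :=
    (continuous_const.mul continuous_id).intervalIntegrable 0 R
  have h3 : IntervalIntegrable (fun y : ℝ => c * y ^ 2) volume 0 R :=
    (continuous_const.mul (continuous_pow 2)).intervalIntegrable 0 R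
  rw [intervalIntegral.integral_add (h1.add h2) h3, intervalIntegral.integral_add h1 h2,
    intervalIntegral.integral_const, intervalIntegral.integral_const_mul,
    intervalIntegral.integral_const_mul, integral_id, integral_pow]
  push_cast
  simp only [smul_eq_mul]
  ring

lemma tri_rect_int (r l : ℝ) (hr : 0 < r) (hl : 0 < l) (f : ℝ → ℝ)
    (hf : IntegrableOn f (Set.Icc (0 : ℝ) l)) (k : ℝ) :
    ∫ p in Set.Icc (0:ℝ) l ×ˢ Set.Ico (0:ℝ) r,
        (1 - p.2 / r) * ((1 - p.2 / r) * f p.1 + k / r * p.2)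
      = r / 3 * (∫ x in (0:ℝ)..l, f x) + 1 / 6 * l * k * r := by
  have hy1 : Integrable (fun y : ℝ => (1 - y / r) * (1 - y / r))
      (volume.restrict (Set.Ico (0:ℝ) r)) :=
    (((continuous_const.sub (continuous_id.div_const r)).mul
      (continuous_const.sub (continuous_id.div_const r))).integrableOn_Icc).mono_set
      Set.Ico_subset_Icc_self
  have hy2 : Integrable (fun y : ℝ => (1 - y / r) * (k / r * y))
      (volume.restrict (Set.Ico (0:ℝ) r)) :=
    (((continuous_const.sub (continuous_id.div_const r)).mul
      (continuous_const.mul continuous_id)).integrableOn_Icc).mono_set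
      Set.Ico_subset_Icc_self
  have hone : Integrable (fun _ : ℝ => (1:ℝ)) (volume.restrict (Set.Icc (0:ℝ) l)) :=
    integrableOn_const (by rw [Real.volume_Icc]; exact ENNReal.ofReal_ne_top)
  have h1 : Integrable (fun p : ℝ × ℝ => f p.1 * ((1 - p.2 / r) * (1 - p.2 / r)))
      ((volume.restrict (Set.Icc (0:ℝ) l)).prod (volume.restrict (Set.Ico (0:ℝ) r))) :=
    hf.mul_prod hy1
  have h2 : Integrable (fun p : ℝ × ℝ => (1:ℝ) * ((1 - p.2 / r) * (k / r * p.2)))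
      ((volume.restrict (Set.Icc (0:ℝ) l)).prod (volume.restrict (Set.Ico (0:ℝ) r))) :=
    hone.mul_prod hy2
  rw [Measure.volume_eq_prod, ← Measure.prod_restrict]
  have hcongr : ∀ p : ℝ × ℝ, (1 - p.2 / r) * ((1 - p.2 / r) * f p.1 + k / r * p.2)
      = f p.1 * ((1 - p.2 / r) * (1 - p.2 / r)) + (1:ℝ) * ((1 - p.2 / r) * (k / r * p.2)) :=
    fun p => by ring
  have p1 := integral_prod_mul (μ := volume.restrict (Set.Icc (0:ℝ) l))
    (ν := volume.restrict (Set.Ico (0:ℝ) r)) f (fun y => (1 - y / r) * (1 - y / r))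
  have p2 := integral_prod_mul (μ := volume.restrict (Set.Icc (0:ℝ) l))
    (ν := volume.restrict (Set.Ico (0:ℝ) r)) (fun _ => (1:ℝ)) (fun y => (1 - y / r) * (k / r * y))
  rw [integral_congr_ae (Filter.Eventually.of_forall hcongr), integral_add h1 h2, p1, p2]
  have e1 : ∫ x : ℝ, f x ∂(volume.restrict (Set.Icc (0:ℝ) l)) = ∫ x in (0:ℝ)..l, f x := by
    rw [intervalIntegral.integral_of_le hl.le]
    exact integral_Icc_eq_integral_Ioc
  have e2 : ∫ _ : ℝ, (1:ℝ) ∂(volume.restrict (Set.Icc (0:ℝ) l)) = l := by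
    simp [Real.volume_Icc, hl.le]
  have e3 : ∫ y : ℝ, (1 - y / r) * (1 - y / r) ∂(volume.restrict (Set.Ico (0:ℝ) r)) = r / 3 := by
    rw [← integral_Icc_eq_integral_Ico, integral_Icc_eq_integral_Ioc, ← intervalIntegral.integral_of_le hr.le]
    have : ∀ y : ℝ, (1 - y / r) * (1 - y / r) = 1 + (-2 / r) * y + (1 / r ^ 2) * y ^ 2 :=
      fun y => by ring
    rw [intervalIntegral.integral_congr (fun y _ => this y), tri_poly_int]
    field_simp
    ring
  have e4 : ∫ y : ℝ, (1 - y / r) * (k / r * y) ∂(volume.restrict (Set.Ico (0:ℝ) r))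
      = k * r / 6 := by
    rw [← integral_Icc_eq_integral_Ico, integral_Icc_eq_integral_Ioc, ← intervalIntegral.integral_of_le hr.le]
    have : ∀ y : ℝ, (1 - y / r) * (k / r * y) = 0 + (k / r) * y + (-(k / r ^ 2)) * y ^ 2 :=
      fun y => by ring
    rw [intervalIntegral.integral_congr (fun y _ => this y), tri_poly_int]
    field_simp
    ring
  rw [e1, e2, e3, e4]
  ring

end TriAux3


/-- If `f : [0,l] → ℝ` is integrable, then
`∫_Δ F(x,y) dxdy = (r/3)·∫₀ˡ f(x) dx + (1/6)·l·k·r`; and if moreover `f ≥ 0` and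
`0 ≤ k ≤ (∫₀ˡ f)/l`, then `∫_Δ |F(x,y)| dxdy ≤ (r/2)·∫₀ˡ f(x) dx`. -/
theorem triangleExt_integral_eq_and_L1_bound (r l d : ℝ) (hr : 0 < r) (hl : 0 < l)
    (hd0 : 0 ≤ d) (hdl : d ≤ l) (f : ℝ → ℝ)
    (hf_int : IntegrableOn f (Set.Icc (0 : ℝ) l)) (k : ℝ) :
    (∫ p in triangleSet r l d, triangleExt r d k f p)
        = r / 3 * (∫ x in (0 : ℝ)..l, f x) + 1 / 6 * l * k * r
      ∧ ((∀ x ∈ Set.Icc (0 : ℝ) l, 0 ≤ f x) → 0 ≤ k → k ≤ (∫ x in (0 : ℝ)..l, f x) / l →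
          ∫ p in triangleSet r l d, |triangleExt r d k f p|
            ≤ r / 2 * ∫ x in (0 : ℝ)..l, f x) := by
  have hs : MeasurableSet (Set.Icc (0:ℝ) l ×ˢ Set.Ico (0:ℝ) r) :=
    measurableSet_Icc.prod measurableSet_Ico
  have key : ∀ p : ℝ × ℝ, p ∈ Set.Icc (0:ℝ) l ×ˢ Set.Ico (0:ℝ) r →
      triangleExt r d k f (triPhi r d p) = (1 - p.2 / r) * f p.1 + k / r * p.2 := by
    intro p hp
    have hyr : p.2 < r := hp.2.2
    have ht : (0:ℝ) < 1 - p.2 / r := by rw [sub_pos, div_lt_one hr]; exact hyr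
    simp only [triangleExt, triPhi, if_neg (ne_of_lt hyr)]
    rw [show (d / r * p.2 + (1 - p.2 / r) * p.1 - d / r * p.2) = (1 - p.2 / r) * p.1 by ring,
      mul_div_cancel_left₀ _ (ne_of_gt ht)]
    exact if_neg (ne_of_lt hyr)
  have hmain : (∫ p in triangleSet r l d, triangleExt r d k f p)
      = r / 3 * (∫ x in (0 : ℝ)..l, f x) + 1 / 6 * l * k * r := by
    rw [tri_cov r l d hr (triangleExt r d k f), ← tri_rect_int r l hr hl f hf_int k]
    exact setIntegral_congr_fun hs fun p hp => by rw [key p hp]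
  refine ⟨hmain, fun hf0 hk0 hkI => ?_⟩
  have habs : (∫ p in triangleSet r l d, |triangleExt r d k f p|)
      = r / 3 * (∫ x in (0 : ℝ)..l, f x) + 1 / 6 * l * k * r := by
    rw [tri_cov r l d hr (fun p => |triangleExt r d k f p|),
      ← tri_rect_int r l hr hl f hf_int k]
    refine setIntegral_congr_fun hs fun p hp => ?_
    have ht : (0:ℝ) < 1 - p.2 / r := by rw [sub_pos, div_lt_one hr]; exact hp.2.2
    have hnn : 0 ≤ (1 - p.2 / r) * f p.1 + k / r * p.2 := by
      have := hf0 p.1 hp.1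
      have h1 : 0 ≤ (1 - p.2 / r) * f p.1 := mul_nonneg ht.le this
      have h2 : 0 ≤ k / r * p.2 := mul_nonneg (div_nonneg hk0 hr.le) hp.2.1
      linarith
    simp only [key p hp, abs_of_nonneg hnn]
  rw [habs]
  have hI : 0 ≤ ∫ x in (0:ℝ)..l, f x :=
    intervalIntegral.integral_nonneg hl.le fun x hx => hf0 x hx
  have hlk : l * k ≤ ∫ x in (0:ℝ)..l, f x := by
    rw [mul_comm]
    exact (le_div_iff₀ hl).1 hkI
  nlinarith [hr.le]
end

section
/- Let L > 0 and let f : ℝ → ℝ be L-periodic, continuous and locally absolutely continuous with derivative f' ∈ L²(0,L), and let k = min f (the minimum of f over one period, which is attained). Then ∫₀^L f(x)² dx − 2k·∫₀^L f(x) dx + k²·L ≤ (L²/8)·∫₀^L (f'(x))² dx. -/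
open MeasureTheory

private lemma periodic_intervalIntegrable_aux {h : ℝ → ℝ} {L : ℝ} (hL : 0 < L)
    (hp : Function.Periodic h L) (hint : IntervalIntegrable h volume 0 L) :
    ∀ a b : ℝ, IntervalIntegrable h volume a b := by
  have base : ∀ n : ℤ, IntervalIntegrable h volume ((n : ℝ) * L) ((n : ℝ) * L + L) := by
    intro n
    have h1 := hint.comp_add_right (-((n : ℝ) * L))
    have heq : (fun x => h (x + -((n : ℝ) * L))) = h := by
      funext x
      rw [← sub_eq_add_neg]
      exact hp.sub_int_mul_eq n
    rw [heq] at h1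
    have e1 : (0 : ℝ) - -((n : ℝ) * L) = (n : ℝ) * L := by ring
    have e2 : L - -((n : ℝ) * L) = (n : ℝ) * L + L := by ring
    rwa [e1, e2] at h1
  have chain : ∀ (n : ℤ) (N : ℕ),
      IntervalIntegrable h volume ((n : ℝ) * L) (((n : ℝ) + (N : ℝ)) * L) := by
    intro n N
    induction N with
    | zero => simpa using IntervalIntegrable.refl
    | succ N ih =>
      have hstep := base (n + N)
      have e1 : ((n + N : ℤ) : ℝ) * L = ((n : ℝ) + (N : ℝ)) * L := by push_cast; ring
      have e2 : ((n + N : ℤ) : ℝ) * L + L = ((n : ℝ) + ((N : ℕ) + 1 : ℕ)) * L := by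
        push_cast; ring
      rw [e2, e1] at hstep
      exact ih.trans hstep
  intro a b
  obtain ⟨n, hn⟩ : ∃ n : ℤ, (n : ℝ) * L ≤ min a b := by
    refine ⟨⌊min a b / L⌋, ?_⟩
    rw [← le_div_iff₀ hL]
    exact Int.floor_le _
  obtain ⟨N, hN⟩ : ∃ N : ℕ, max a b ≤ ((n : ℝ) + (N : ℝ)) * L := by
    refine ⟨⌈(max a b - (n : ℝ) * L) / L⌉₊, ?_⟩
    have h1 : (max a b - (n : ℝ) * L) / L ≤ (⌈(max a b - (n : ℝ) * L) / L⌉₊ : ℝ) :=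
      Nat.le_ceil _
    rw [div_le_iff₀ hL] at h1
    nlinarith
  refine (chain n N).mono_set ?_
  have hnn : (n : ℝ) * L ≤ ((n : ℝ) + (N : ℝ)) * L := by nlinarith [Nat.cast_nonneg (α := ℝ) N]
  rw [Set.uIcc_of_le hnn]
  exact Set.uIcc_subset_Icc ⟨le_trans hn (min_le_left a b), le_trans (le_max_left a b) hN⟩
    ⟨le_trans hn (min_le_right a b), le_trans (le_max_right a b) hN⟩

private lemma cs_interval {h : ℝ → ℝ} {a b : ℝ} (hab : a ≤ b)
    (h1 : IntervalIntegrable h volume a b)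
    (h2 : IntervalIntegrable (fun t => h t ^ 2) volume a b) :
    (∫ t in a..b, h t) ^ 2 ≤ (b - a) * ∫ t in a..b, h t ^ 2 := by
  rcases eq_or_lt_of_le hab with rfl | hlt
  · simp
  set S := ∫ t in a..b, h t with hS
  set Q := ∫ t in a..b, h t ^ 2 with hQ
  have hμ : 0 < b - a := by linarith
  set c := S / (b - a) with hc
  have hexp : ∫ t in a..b, (h t - c) ^ 2 = Q - 2 * c * S + c ^ 2 * (b - a) := by
    have hrw : ∀ t, (h t - c) ^ 2 = h t ^ 2 - (2 * c) * h t + c ^ 2 := fun t => by ring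
    simp_rw [hrw]
    rw [intervalIntegral.integral_add (h2.sub (h1.const_mul _)) intervalIntegrable_const,
        intervalIntegral.integral_sub h2 (h1.const_mul _),
        intervalIntegral.integral_const_mul, intervalIntegral.integral_const]
    simp only [smul_eq_mul, ← hS, ← hQ]
    ring
  have hnn : 0 ≤ ∫ t in a..b, (h t - c) ^ 2 :=
    intervalIntegral.integral_nonneg hab (fun t _ => sq_nonneg _)
  rw [hexp] at hnn
  have hcm : c * (b - a) = S := div_mul_cancel₀ _ (ne_of_gt hμ)
  nlinarith [mul_nonneg hnn hμ.le]

/-- If `f : ℝ → ℝ` is `L`-periodic, continuous and locally absolutely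
continuous with `L`-periodic derivative `f' ∈ L²(0,L)`, and `k` is the (attained) minimum
of `f`, then `∫₀ᴸ f² - 2k ∫₀ᴸ f + k² L ≤ (L²/8) ∫₀ᴸ (f')²`. -/
theorem poincare_closed_curve_min (L : ℝ) (hL : 0 < L) (f f' : ℝ → ℝ)
    (hper : ∀ x, f (x + L) = f x) (hper' : ∀ x, f' (x + L) = f' x)
    (hcont : Continuous f)
    (hf'L2 : MemLp f' 2 (volume.restrict (Set.Ioc (0 : ℝ) L)))
    (hf : ∀ x y : ℝ, f x - f y = ∫ t in y..x, f' t)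
    (k : ℝ) (hk_le : ∀ x, k ≤ f x) (hk_att : ∃ z, f z = k) :
    (∫ x in (0 : ℝ)..L, (f x) ^ 2) - 2 * k * (∫ x in (0 : ℝ)..L, f x) + k ^ 2 * L
      ≤ L ^ 2 / 8 * ∫ x in (0 : ℝ)..L, (f' x) ^ 2 := by
  obtain ⟨z, hz⟩ := hk_att
  haveI : IsFiniteMeasure (volume.restrict (Set.Ioc (0 : ℝ) L)) :=
    ⟨by rw [Measure.restrict_apply_univ]; exact measure_Ioc_lt_top⟩
  -- integrability of f'^2 and f' on every interval
  have hsq0 : IntervalIntegrable (fun t => f' t ^ 2) volume 0 L := by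
    rw [intervalIntegrable_iff_integrableOn_Ioc_of_le hL.le]
    exact hf'L2.integrable_sq
  have hsq : ∀ a b : ℝ, IntervalIntegrable (fun t => f' t ^ 2) volume a b :=
    periodic_intervalIntegrable_aux hL (fun x => by simp [hper' x]) hsq0
  have hf'int : ∀ a b : ℝ, IntervalIntegrable f' volume a b := by
    apply periodic_intervalIntegrable_aux hL hper'
    rw [intervalIntegrable_iff_integrableOn_Ioc_of_le hL.le]
    exact hf'L2.integrable (by norm_num)
  have hg2c : Continuous fun x => (f x - k) ^ 2 := (hcont.sub continuous_const).pow 2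
  -- shift integrals to [z, z+L]
  have hshiftg : (∫ x in (0 : ℝ)..L, (f x - k) ^ 2) = ∫ x in z..(z + L), (f x - k) ^ 2 := by
    have hp2 : Function.Periodic (fun x => (f x - k) ^ 2) L := fun x => by simp [hper x]
    simpa using hp2.intervalIntegral_add_eq 0 z
  have hshift' : (∫ x in (0 : ℝ)..L, (f' x) ^ 2) = ∫ x in z..(z + L), (f' x) ^ 2 := by
    have hp2 : Function.Periodic (fun x => (f' x) ^ 2) L := fun x => by simp [hper' x]
    simpa using hp2.intervalIntegral_add_eq 0 z
  -- LHS equals ∫ (f-k)^2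
  have hfint : IntervalIntegrable f volume 0 L := hcont.intervalIntegrable _ _
  have hf2int : IntervalIntegrable (fun x => f x ^ 2) volume 0 L :=
    (hcont.pow 2).intervalIntegrable _ _
  have hLHS : (∫ x in (0 : ℝ)..L, (f x) ^ 2) - 2 * k * (∫ x in (0 : ℝ)..L, f x) + k ^ 2 * L
      = ∫ x in (0 : ℝ)..L, (f x - k) ^ 2 := by
    have hrw : ∀ x, (f x - k) ^ 2 = f x ^ 2 - (2 * k) * f x + k ^ 2 := fun x => by ring
    simp_rw [hrw]
    rw [intervalIntegral.integral_add (hf2int.sub (hfint.const_mul _)) intervalIntegrable_const,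
        intervalIntegral.integral_sub hf2int (hfint.const_mul _),
        intervalIntegral.integral_const_mul, intervalIntegral.integral_const]
    simp only [smul_eq_mul, sub_zero]
    ring
  set A := ∫ t in z..(z + L / 2), f' t ^ 2 with hA
  set B := ∫ t in (z + L / 2)..(z + L), f' t ^ 2 with hB
  have hzL2 : z ≤ z + L / 2 := by linarith
  have hL2L : z + L / 2 ≤ z + L := by linarith
  -- left half pointwise bound
  have left_pt : ∀ x ∈ Set.Icc z (z + L / 2), (f x - k) ^ 2 ≤ (x - z) * A := by
    intro x hx
    have h1 : f x - k = ∫ t in z..x, f' t := by rw [← hz]; exact hf x z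
    rw [h1]
    calc (∫ t in z..x, f' t) ^ 2 ≤ (x - z) * ∫ t in z..x, f' t ^ 2 :=
          cs_interval hx.1 (hf'int z x) (hsq z x)
      _ ≤ (x - z) * A := by
          apply mul_le_mul_of_nonneg_left _ (by linarith [hx.1])
          exact intervalIntegral.integral_mono_interval le_rfl hx.1 hx.2
            (Filter.Eventually.of_forall fun t => sq_nonneg _) (hsq z (z + L / 2))
  -- right half pointwise bound
  have hfzL : f (z + L) = k := by rw [hper z, hz]
  have right_pt : ∀ x ∈ Set.Icc (z + L / 2) (z + L), (f x - k) ^ 2 ≤ (z + L - x) * B := by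
    intro x hx
    have h1 : f x - k = -∫ t in x..(z + L), f' t := by
      rw [← hfzL, hf x (z + L), intervalIntegral.integral_symm]
    rw [h1, even_two.neg_pow]
    calc (∫ t in x..(z + L), f' t) ^ 2 ≤ (z + L - x) * ∫ t in x..(z + L), f' t ^ 2 :=
          cs_interval hx.2 (hf'int _ _) (hsq _ _)
      _ ≤ (z + L - x) * B := by
          apply mul_le_mul_of_nonneg_left _ (by linarith [hx.2])
          exact intervalIntegral.integral_mono_interval hx.1 hx.2 le_rfl
            (Filter.Eventually.of_forall fun t => sq_nonneg _) (hsq (z + L / 2) (z + L))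
  -- integrate left half
  have left_int : (∫ x in z..(z + L / 2), (f x - k) ^ 2) ≤ L ^ 2 / 8 * A := by
    have h1 : (∫ x in z..(z + L / 2), (f x - k) ^ 2) ≤ ∫ x in z..(z + L / 2), (x - z) * A :=
      intervalIntegral.integral_mono_on hzL2 (hg2c.intervalIntegrable _ _)
        (((continuous_id.sub continuous_const).mul continuous_const).intervalIntegrable _ _)
        left_pt
    have h2 : (∫ x in z..(z + L / 2), (x - z) * A) = L ^ 2 / 8 * A := by
      rw [intervalIntegral.integral_mul_const]
      have h3 : (∫ x in z..(z + L / 2), (x - z)) = L ^ 2 / 8 := by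
        rw [intervalIntegral.integral_comp_sub_right (fun u => u) z, integral_id]
        ring_nf
      rw [h3]
    linarith
  -- integrate right half
  have right_int : (∫ x in (z + L / 2)..(z + L), (f x - k) ^ 2) ≤ L ^ 2 / 8 * B := by
    have h1 : (∫ x in (z + L / 2)..(z + L), (f x - k) ^ 2)
        ≤ ∫ x in (z + L / 2)..(z + L), (z + L - x) * B :=
      intervalIntegral.integral_mono_on hL2L (hg2c.intervalIntegrable _ _)
        (((continuous_const.sub continuous_id).mul continuous_const).intervalIntegrable _ _)
        right_pt
    have h2 : (∫ x in (z + L / 2)..(z + L), (z + L - x) * B) = L ^ 2 / 8 * B := by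
      rw [intervalIntegral.integral_mul_const]
      have h3 : (∫ x in (z + L / 2)..(z + L), (z + L - x)) = L ^ 2 / 8 := by
        rw [intervalIntegral.integral_comp_sub_left (fun u => u) (z + L), integral_id]
        ring_nf
      rw [h3]
    linarith
  have hsum : (∫ x in z..(z + L), (f x - k) ^ 2)
      = (∫ x in z..(z + L / 2), (f x - k) ^ 2) + ∫ x in (z + L / 2)..(z + L), (f x - k) ^ 2 :=
    (intervalIntegral.integral_add_adjacent_intervals (hg2c.intervalIntegrable _ _)
      (hg2c.intervalIntegrable _ _)).symm
  have hAB : A + B = ∫ x in z..(z + L), f' x ^ 2 :=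
    intervalIntegral.integral_add_adjacent_intervals (hsq _ _) (hsq _ _)
  rw [hLHS, hshiftg, hshift', hsum, ← hAB]
  nlinarith [left_int, right_int]
end

section
/- If f : ∂P → ℝ is continuous, nonnegative, and H¹ on each side of P, and k ≥ 0, then ∫_{∂P} f² dμ ≤ (4/r)·∫_P F(x,y)² dxdy. -/
open MeasureTheory
open scoped RealInnerProductSpace

/-- The Euclidean plane. -/
abbrev E2 : Type := EuclideanSpace ℝ (Fin 2)

/-- Unit vector pointing from `A` to `B`. -/
noncomputable def uvec (A B : E2) : E2 := (dist A B)⁻¹ • (B - A)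

/-- The restriction of `f : ∂P → ℝ` to the side from `A` to `B`, viewed as a function
on `[0, dist A B]` via the arclength parametrization. -/
noncomputable def sideFun (A B : E2) (f : E2 → ℝ) (t : ℝ) : ℝ := f (A + t • uvec A B)

/-- The (signed) distance `d` from `A` to the foot of the altitude from `c` onto the
line through `A` and `B`. -/
noncomputable def footd (A B c : E2) : ℝ := ⟪c - A, uvec A B⟫

/-- The trianglewise extension `F` on the triangle `conv{A, B, c}`: in Euclidean
coordinates in which `A = (0,0)`, `B = (l,0)` and `c = (d,r)`, it is
`F(x,y) = (1 − y/r)·f((x − (d/r)y)/(1 − y/r)) + (k/r)·y` (and `= k` for `y = r`). -/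
noncomputable def triExt (A B c : E2) (r k : ℝ) (f : E2 → ℝ) (p : E2) : ℝ :=
  let u := uvec A B
  let dd := footd A B c
  let nv := r⁻¹ • (c - A - dd • u)
  let X := ⟪p - A, u⟫
  let Y := ⟪p - A, nv⟫
  if Y = r then k
  else (1 - Y / r) * f (A + ((X - (dd / r) * Y) / (1 - Y / r)) • u) + (k / r) * Y


lemma triangle_eq_slices (l d r : ℝ) (hl : 0 < l) (hr : 0 < r) :
    convexHull ℝ {((0:ℝ),(0:ℝ)), ((0:ℝ),l), (r,d)}
      = {z : ℝ × ℝ | z.1 ∈ Set.Icc 0 r ∧ z.2 ∈ Set.Icc (d/r*z.1) (l + (d-l)/r*z.1)} := by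
  have hrr : d / r * r = d := div_mul_cancel₀ _ hr.ne'
  have hrr2 : (d - l) / r * r = d - l := div_mul_cancel₀ _ hr.ne'
  apply Set.Subset.antisymm
  · apply convexHull_min
    · intro z hz
      simp only [Set.mem_insert_iff, Set.mem_singleton_iff] at hz
      rcases hz with h | h | h <;> subst h <;>
        exact ⟨⟨by norm_num; try linarith, by norm_num; try linarith⟩,
          by norm_num [hrr, hrr2]; try linarith, by norm_num [hrr, hrr2]; try linarith⟩
    · rintro p ⟨⟨hp1, hp2⟩, hp3, hp4⟩ q ⟨⟨hq1, hq2⟩, hq3, hq4⟩ α β hα hβ hαβ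
      simp only [Set.mem_setOf_eq, Prod.smul_fst, Prod.smul_snd, Prod.fst_add, Prod.snd_add,
        smul_eq_mul, Set.mem_Icc]
      refine ⟨⟨by nlinarith, by nlinarith⟩, by nlinarith, by nlinarith⟩
  · rintro ⟨y, x⟩ ⟨⟨hy0, hyr⟩, hx1, hx2⟩
    simp only [Set.mem_Icc] at hx1 hx2 ⊢
    simp only at hy0 hyr hx1 hx2
    set γ := y / r with hγdef
    have hγr : γ * r = y := div_mul_cancel₀ _ hr.ne'
    have hγ0 : 0 ≤ γ := div_nonneg hy0 hr.le
    have hγ1 : γ ≤ 1 := (div_le_one hr).2 hyr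
    have hq0 : ((y, d/r*y) : ℝ × ℝ) ∈ convexHull ℝ {((0:ℝ),(0:ℝ)), ((0:ℝ),l), (r,d)} := by
      apply segment_subset_convexHull (x := ((0:ℝ),(0:ℝ))) (y := ((r:ℝ),d)) (by simp) (by simp)
      refine ⟨1 - γ, γ, by linarith, hγ0, by ring, ?_⟩
      simp only [Prod.smul_mk, smul_eq_mul, Prod.mk_add_mk, mul_zero, smul_zero, Prod.mk.injEq]
      constructor
      · simpa using hγr
      · simp only [zero_add]; rw [hγdef]; ring
    have hq1 : ((y, l + (d-l)/r*y) : ℝ × ℝ) ∈ convexHull ℝ {((0:ℝ),(0:ℝ)), ((0:ℝ),l), (r,d)} := by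
      apply segment_subset_convexHull (x := (((0:ℝ)),(l:ℝ))) (y := ((r:ℝ),d)) (by simp) (by simp)
      refine ⟨1 - γ, γ, by linarith, hγ0, by ring, ?_⟩
      simp only [Prod.smul_mk, smul_eq_mul, Prod.mk_add_mk, mul_zero, Prod.mk.injEq]
      constructor
      · simpa using hγr
      · rw [hγdef]; field_simp; ring
    rcases eq_or_lt_of_le (le_trans hx1 hx2) with heq | hlt
    · have hxa : x = d/r*y := le_antisymm (heq ▸ hx2) hx1
      rw [hxa]
      exact hq0
    · have hba : (0:ℝ) < (l + (d-l)/r*y) - d/r*y := by linarith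
      set t := (x - d/r*y) / ((l + (d-l)/r*y) - d/r*y) with htdef
      have htm : t * ((l + (d-l)/r*y) - d/r*y) = x - d/r*y := div_mul_cancel₀ _ hba.ne'
      have ht0 : 0 ≤ t := div_nonneg (by linarith) hba.le
      have ht1 : t ≤ 1 := (div_le_one hba).2 (by linarith)
      apply (convex_convexHull ℝ ({((0:ℝ),(0:ℝ)), ((0:ℝ),l), (r,d)} : Set (ℝ×ℝ))).segment_subset
        hq0 hq1
      refine ⟨1 - t, t, by linarith, ht0, by ring, ?_⟩
      simp only [Prod.smul_mk, smul_eq_mul, Prod.mk_add_mk, Prod.mk.injEq]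
      constructor
      · ring
      · nlinarith [htm]


-- computation of the inner (x) integral at height y ∈ [0,r)
lemma inner_slice (l d r y : ℝ) (hl : 0 < l) (hr : 0 < r) (φc : ℝ → ℝ)
    (hylt : y < r) :
    ∫ x in Set.Icc (d/r*y) (l + (d-l)/r*y), ((1 - y/r) * φc ((x - d/r*y)/(1 - y/r)))^2
      = (1 - y/r)^3 * ∫ t in (0:ℝ)..l, (φc t)^2 := by
  set c₁ := 1 - y/r with hc₁def
  have hc₁ : 0 < c₁ := by
    have : y / r < 1 := (div_lt_one hr).2 hylt
    simp only [hc₁def]; linarith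
  set a := d/r*y with hadef
  have hab : l + (d-l)/r*y = a + c₁ * l := by
    rw [hadef, hc₁def]; field_simp; ring
  have hale : a ≤ a + c₁ * l := by nlinarith
  rw [hab, integral_Icc_eq_integral_Ioc, ← intervalIntegral.integral_of_le hale]
  have h1 : (∫ x in a..(a + c₁*l), (c₁ * φc ((x - a)/c₁))^2)
      = ∫ x in (a-a)..(a + c₁*l - a), (c₁ * φc (x/c₁))^2 :=
    intervalIntegral.integral_comp_sub_right (fun x => (c₁ * φc (x/c₁))^2) a
  rw [h1]
  have h2 : a - a = 0 := by ring
  have h3 : a + c₁ * l - a = c₁ * l := by ring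
  rw [h2, h3]
  have h4 : (∫ x in (0:ℝ)..(c₁*l), (c₁ * φc (x/c₁))^2)
      = c₁ • ∫ x in (0/c₁)..(c₁*l/c₁), (c₁ * φc x)^2 :=
    intervalIntegral.integral_comp_div (fun x => (c₁ * φc x)^2) hc₁.ne'
  rw [h4, zero_div, mul_div_cancel_left₀ _ hc₁.ne', smul_eq_mul]
  have h5 : (∫ x in (0:ℝ)..l, (c₁ * φc x)^2) = c₁^2 * ∫ x in (0:ℝ)..l, (φc x)^2 := by
    rw [← intervalIntegral.integral_const_mul]
    apply intervalIntegral.integral_congr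
    intro x _
    ring
  rw [h5]; ring

lemma outer_integral (r : ℝ) (hr : 0 < r) :
    (∫ y in (0:ℝ)..r, (1 - y/r)^3) = r / 4 := by
  have h1 : (∫ y in (0:ℝ)..r, (1 - y/r)^3)
      = r • ∫ y in (0/r)..(r/r), (1-y)^3 :=
    intervalIntegral.integral_comp_div (fun t => (1-t)^3) hr.ne'
  rw [h1, zero_div, div_self hr.ne']
  have h2 : (∫ y in (0:ℝ)..1, (1-y)^3) = ∫ y in (1-(1:ℝ))..(1-(0:ℝ)), y^3 :=
    intervalIntegral.integral_comp_sub_left (fun t => t^3) 1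
  rw [h2]
  norm_num [integral_pow]
  ring


section Planar

lemma planar_bound (l d r k : ℝ) (hl : 0 < l) (hr : 0 < r) (hk : 0 ≤ k) (φ : ℝ → ℝ)
    (hφc : ContinuousOn φ (Set.Icc 0 l)) (hφ0 : ∀ t ∈ Set.Icc 0 l, 0 ≤ φ t) :
    r / 4 * ∫ t in (0:ℝ)..l, (φ t)^2
      ≤ ∫ z in convexHull ℝ {((0:ℝ),(0:ℝ)), ((0:ℝ),l), (r,d)},
          (if z.1 = r then k else (1 - z.1/r) * φ ((z.2 - d/r*z.1)/(1 - z.1/r)) + k/r*z.1)^2 := by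
  classical
  set S : Set (ℝ × ℝ) :=
    {z : ℝ × ℝ | z.1 ∈ Set.Icc 0 r ∧ z.2 ∈ Set.Icc (d/r*z.1) (l + (d-l)/r*z.1)} with hSdef
  have hTeq : convexHull ℝ {((0:ℝ),(0:ℝ)), ((0:ℝ),l), (r,d)} = S :=
    triangle_eq_slices l d r hl hr
  have hTcpt : IsCompact (convexHull ℝ ({((0:ℝ),(0:ℝ)), ((0:ℝ),l), (r,d)} : Set (ℝ×ℝ))) :=
    (((Set.finite_singleton _).insert _).insert _).isCompact_convexHull ℝ
  have hSm : MeasurableSet S := hTeq ▸ hTcpt.isClosed.measurableSet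
  have hSfin : volume S ≠ ⊤ := hTeq ▸ hTcpt.measure_lt_top.ne
  -- the clamp and the clamped function
  set clamp : ℝ → ℝ := fun s => max 0 (min s l) with hclampdef
  have hclamp_mem : ∀ s, clamp s ∈ Set.Icc 0 l := fun s =>
    ⟨le_max_left _ _, max_le hl.le (min_le_right _ _)⟩
  have hclamp_id : ∀ s ∈ Set.Icc (0:ℝ) l, clamp s = s := by
    intro s hs
    simp only [hclampdef]
    rw [min_eq_left hs.2, max_eq_right hs.1]
  set φc : ℝ → ℝ := fun s => φ (clamp s) with hφcdef
  have hφcc : Continuous φc :=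
    hφc.comp_continuous (continuous_const.max (continuous_id.min continuous_const)) hclamp_mem
  have hφc0 : ∀ s, 0 ≤ φc s := fun s => hφ0 _ (hclamp_mem s)
  obtain ⟨M, hM⟩ := isCompact_Icc.exists_bound_of_continuousOn hφc
  have hM0 : 0 ≤ M := le_trans (norm_nonneg _) (hM 0 ⟨le_refl _, hl.le⟩)
  have hφcM : ∀ s, |φc s| ≤ M := fun s => by
    rw [← Real.norm_eq_abs]; exact hM _ (hclamp_mem s)
  -- σ, G, h
  set σf : ℝ × ℝ → ℝ := fun z => (z.2 - d/r*z.1)/(1 - z.1/r) with hσdef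
  have hσmeas : Measurable σf :=
    (measurable_snd.sub ((measurable_fst.const_mul _))).div
      (measurable_const.sub (measurable_fst.div_const r))
  set G : ℝ × ℝ → ℝ := fun z => if z.1 = r then k else (1 - z.1/r) * φc (σf z) + k/r*z.1
    with hGdef
  set h : ℝ × ℝ → ℝ := fun z => ((1 - z.1/r) * φc (σf z))^2 with hhdef
  have hGm : Measurable G := by
    apply Measurable.ite ((measurableSet_singleton r).preimage measurable_fst)
    · exact measurable_const
    · exact ((measurable_const.sub (measurable_fst.div_const r)).mul
        (hφcc.measurable.comp hσmeas)).add ((measurable_fst.const_mul _))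
  have hhm : Measurable h := by
    apply Measurable.pow_const
    exact (measurable_const.sub (measurable_fst.div_const r)).mul (hφcc.measurable.comp hσmeas)
  -- basic facts on S
  have hSfacts : ∀ z ∈ S, 0 ≤ 1 - z.1/r ∧ 1 - z.1/r ≤ 1 ∧ 0 ≤ k/r*z.1 ∧ k/r*z.1 ≤ k := by
    rintro z ⟨⟨h1, h2⟩, _⟩
    have e1 : z.1 / r ≤ 1 := (div_le_one hr).2 h2
    have e2 : 0 ≤ z.1 / r := div_nonneg h1 hr.le
    refine ⟨by linarith, by linarith, mul_nonneg (div_nonneg hk hr.le) h1, ?_⟩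
    have : k/r*z.1 ≤ k/r*r := by
      apply mul_le_mul_of_nonneg_left h2 (div_nonneg hk hr.le)
    rwa [div_mul_cancel₀ _ hr.ne'] at this
  have hGbound : ∀ z ∈ S, |G z| ≤ M + k := by
    intro z hz
    obtain ⟨e1, e2, e3, e4⟩ := hSfacts z hz
    by_cases hzr : z.1 = r
    · simp only [hGdef]
      rw [if_pos hzr, abs_of_nonneg hk]; linarith
    · simp only [hGdef]
      rw [if_neg hzr]
      have := abs_le.1 (hφcM (σf z))
      rw [abs_le]
      constructor <;> nlinarith
  have hhbound : ∀ z ∈ S, |h z| ≤ M^2 := by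
    intro z hz
    obtain ⟨e1, e2, _, _⟩ := hSfacts z hz
    have h5 := abs_le.1 (hφcM (σf z))
    simp only [hhdef]
    rw [abs_of_nonneg (sq_nonneg _)]
    have b1 : (φc (σf z))^2 ≤ M^2 := sq_le_sq' h5.1 h5.2
    have b2 : (1 - z.1/r)^2 ≤ 1 := by nlinarith
    calc ((1 - z.1/r) * φc (σf z))^2 = (1 - z.1/r)^2 * (φc (σf z))^2 := by ring
      _ ≤ 1 * M^2 := by
          apply mul_le_mul b2 b1 (sq_nonneg _) zero_le_one
      _ = M^2 := one_mul _
  -- integrability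
  have hG2i : IntegrableOn (fun z => (G z)^2) S := by
    apply Measure.integrableOn_of_bounded hSfin ((hGm.pow_const 2).aestronglyMeasurable)
      (M := (M+k)^2)
    apply (ae_restrict_iff' hSm).2 (ae_of_all _ ?_)
    intro z hz
    have := abs_le.1 (hGbound z hz)
    rw [Real.norm_eq_abs, abs_of_nonneg (sq_nonneg _)]
    nlinarith
  have hhi : IntegrableOn h S := by
    apply Measure.integrableOn_of_bounded hSfin hhm.aestronglyMeasurable (M := M^2)
    apply (ae_restrict_iff' hSm).2 (ae_of_all _ ?_)
    intro z hz
    rw [Real.norm_eq_abs]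
    exact hhbound z hz
  -- g = G on S
  have hσmem : ∀ z ∈ S, z.1 ≠ r → σf z ∈ Set.Icc (0:ℝ) l := by
    rintro z ⟨⟨h1, h2⟩, h3, h4⟩ hzr
    have hzlt : z.1 < r := lt_of_le_of_ne h2 hzr
    have e1 : z.1 / r < 1 := (div_lt_one hr).2 hzlt
    have hc₁ : 0 < 1 - z.1/r := by linarith
    simp only [Set.mem_Icc] at h3 h4 ⊢
    constructor
    · exact div_nonneg (by linarith [h3]) hc₁.le
    · rw [div_le_iff₀ hc₁]
      have : (d-l)/r*z.1 = d/r*z.1 - l * (z.1/r) := by field_simp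
      nlinarith [h4, this]
  have hgG : ∀ z ∈ S,
      (if z.1 = r then k else (1 - z.1/r) * φ ((z.2 - d/r*z.1)/(1 - z.1/r)) + k/r*z.1) = G z := by
    intro z hz
    by_cases hzr : z.1 = r
    · simp only [hGdef, if_pos hzr]
    · simp only [hGdef, if_neg hzr]
      have : φc (σf z) = φ (σf z) := by rw [hφcdef]; simp only; rw [hclamp_id _ (hσmem z hz hzr)]
      rw [this]
  -- comparison
  have hcmp : ∫ z in S, h z ≤ ∫ z in S, (G z)^2 := by
    apply setIntegral_mono_on hhi hG2i hSm
    intro z hz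
    obtain ⟨e1, _, e3, _⟩ := hSfacts z hz
    by_cases hzr : z.1 = r
    · have h7 : 1 - z.1/r = 0 := by rw [hzr, div_self hr.ne', sub_self]
      simp only [hhdef, hGdef]
      rw [if_pos hzr, h7, zero_mul]
      nlinarith
    · simp only [hhdef, hGdef]
      rw [if_neg hzr]
      have h6 := hφc0 (σf z)
      have ha : 0 ≤ (1 - z.1/r) * φc (σf z) := mul_nonneg e1 h6
      nlinarith
  -- Fubini computation of ∫_S h
  have hSmem : ∀ y x : ℝ, ((y,x) ∈ S) ↔
      (y ∈ Set.Icc (0:ℝ) r ∧ x ∈ Set.Icc (d/r*y) (l + (d-l)/r*y)) := by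
    intro y x; rfl
  have hfub : ∫ z in S, h z = (r/4) * ∫ t in (0:ℝ)..l, (φc t)^2 := by
    rw [← integral_indicator hSm]
    have hint : Integrable (S.indicator h) (volume.prod volume) := by
      rw [← Measure.volume_eq_prod]
      exact (integrable_indicator_iff hSm).2 hhi
    rw [Measure.volume_eq_prod, integral_prod _ hint]
    have h1 : ∀ y : ℝ, (∫ x, S.indicator h (y, x))
        = Set.indicator (Set.Icc (0:ℝ) r)
            (fun y => (1 - y/r)^3 * ∫ t in (0:ℝ)..l, (φc t)^2) y := by
      intro y
      by_cases hy : y ∈ Set.Icc (0:ℝ) r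
      · rw [Set.indicator_of_mem hy]
        have e : ∀ x, S.indicator h (y, x)
            = Set.indicator (Set.Icc (d/r*y) (l + (d-l)/r*y)) (fun x => h (y,x)) x := by
          intro x
          simp only [Set.indicator_apply, hSmem y x, hy, true_and]
        rw [integral_congr_ae (ae_of_all _ e), integral_indicator measurableSet_Icc]
        by_cases hyr : y = r
        · have e1 : l + (d-l)/r*y = d/r*y := by rw [hyr]; field_simp; ring
          rw [e1, integral_Icc_eq_integral_Ioc, Set.Ioc_self,
            Measure.restrict_empty, integral_zero_measure]
          have e2 : 1 - y/r = 0 := by rw [hyr, div_self hr.ne', sub_self]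
          rw [e2]; ring
        · have hylt : y < r := lt_of_le_of_ne hy.2 hyr
          exact inner_slice l d r y hl hr φc hylt
      · rw [Set.indicator_of_notMem hy]
        have e : ∀ x, S.indicator h (y, x) = 0 := by
          intro x
          apply Set.indicator_of_notMem
          rw [hSmem]
          exact fun c => hy c.1
        rw [integral_congr_ae (ae_of_all _ e), integral_zero]
    rw [integral_congr_ae (ae_of_all _ h1), integral_indicator measurableSet_Icc,
      integral_Icc_eq_integral_Ioc, ← intervalIntegral.integral_of_le hr.le,
      intervalIntegral.integral_mul_const, outer_integral r hr]
  -- put everything together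
  have hgG2 : Set.EqOn
      (fun z : ℝ × ℝ =>
        (if z.1 = r then k else (1 - z.1/r) * φ ((z.2 - d/r*z.1)/(1 - z.1/r)) + k/r*z.1)^2)
      (fun z => (G z)^2) S := fun z hz => by simp only; rw [hgG z hz]
  rw [hTeq, setIntegral_congr_fun hSm hgG2]
  have hCeq : (∫ t in (0:ℝ)..l, (φc t)^2) = ∫ t in (0:ℝ)..l, (φ t)^2 := by
    apply intervalIntegral.integral_congr
    intro t ht
    rw [Set.uIcc_of_le hl.le] at ht
    simp only [hφcdef]
    rw [hclamp_id _ ht]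
  calc r / 4 * ∫ t in (0:ℝ)..l, (φ t)^2 = ∫ z in S, h z := by rw [hfub, hCeq]
    _ ≤ ∫ z in S, (G z)^2 := hcmp

end Planar

section Side

lemma side_bound (A B c : E2) (r k : ℝ) (hr : 0 < r) (hAB : A ≠ B)
    (hfoot : ‖c - A - footd A B c • uvec A B‖ = r)
    (f : E2 → ℝ) (hf_cont : ContinuousOn f (segment ℝ A B))
    (hf_nonneg : ∀ p ∈ segment ℝ A B, 0 ≤ f p) (hk : 0 ≤ k) :
    r / 4 * ∫ t in (0:ℝ)..dist A B, (sideFun A B f t)^2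
      ≤ ∫ p in convexHull ℝ {A, B, c}, (triExt A B c r k f p)^2 := by
  classical
  have hl : 0 < dist A B := dist_pos.2 hAB
  set l : ℝ := dist A B with hldef
  set u : E2 := uvec A B with hudef
  have hu : ‖u‖ = 1 := by
    rw [hudef, uvec, norm_smul, norm_inv, Real.norm_eq_abs, abs_of_pos hl, ← dist_eq_norm',
      inv_mul_cancel₀ hl.ne']
  have huu : ⟪u, u⟫ = (1:ℝ) := by
    rw [real_inner_self_eq_norm_sq, hu]; norm_num
  have hBA : B - A = l • u := by
    rw [hudef, uvec, smul_smul, ← hldef, mul_inv_cancel₀ hl.ne', one_smul]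
  set d : ℝ := footd A B c with hddef
  have hdinner : ⟪c - A, u⟫ = d := by rw [hddef, footd, hudef]
  set w : E2 := c - A - d • u with hwdef
  have hw : ‖w‖ = r := hfoot
  have hwu : ⟪w, u⟫ = (0:ℝ) := by
    rw [hwdef, inner_sub_left, hdinner, real_inner_smul_left, huu]; ring
  set nv : E2 := r⁻¹ • w with hnvdef
  have hnv : ‖nv‖ = 1 := by
    rw [hnvdef, norm_smul, norm_inv, Real.norm_eq_abs, abs_of_pos hr, hw,
      inv_mul_cancel₀ hr.ne']
  have hnvu : ⟪nv, u⟫ = (0:ℝ) := by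
    rw [hnvdef, real_inner_smul_left, hwu]; ring
  have hnvnv : ⟪nv, nv⟫ = (1:ℝ) := by
    rw [real_inner_self_eq_norm_sq, hnv]; norm_num
  have horth : Orthonormal ℝ ![nv, u] := by
    rw [orthonormal_iff_ite]
    intro i j
    fin_cases i <;> fin_cases j
    · rw [if_pos rfl]; exact hnvnv
    · rw [if_neg (by decide)]; exact hnvu
    · rw [if_neg (by decide), real_inner_comm]; exact hnvu
    · rw [if_pos rfl]; exact huu
  have hcard : Fintype.card (Fin 2) = Module.finrank ℝ E2 := by
    simp [finrank_euclideanSpace_fin]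
  let bas : Module.Basis (Fin 2) ℝ E2 :=
    basisOfLinearIndependentOfCardEqFinrank horth.linearIndependent hcard
  have hbas : ⇑bas = ![nv, u] :=
    coe_basisOfLinearIndependentOfCardEqFinrank _ _
  let b : OrthonormalBasis (Fin 2) ℝ E2 := bas.toOrthonormalBasis (by rw [hbas]; exact horth)
  have hb0 : b 0 = nv := by
    have : ⇑b = ⇑bas := Module.Basis.coe_toOrthonormalBasis _ _
    rw [this, hbas]; rfl
  have hb1 : b 1 = u := by
    have : ⇑b = ⇑bas := Module.Basis.coe_toOrthonormalBasis _ _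
    rw [this, hbas]; rfl
  set Φ : E2 → ℝ × ℝ := fun p =>
    (MeasurableEquiv.finTwoArrow (((MeasurableEquiv.toLp 2 (Fin 2 → ℝ)).symm) (b.repr (p + -A))))
    with hΦdef
  have hΦval : ∀ p, Φ p = (⟪p - A, nv⟫, ⟪p - A, u⟫) := by
    intro p
    have h0 : Φ p = (b.repr (p + -A) 0, b.repr (p + -A) 1) := rfl
    rw [h0, b.repr_apply_apply, b.repr_apply_apply, hb0, hb1, ← sub_eq_add_neg,
      real_inner_comm nv (p - A), real_inner_comm u (p - A)]
  have hmp : MeasurePreserving Φ volume volume := by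
    have h1 := measurePreserving_add_right (volume : Measure E2) (-A)
    have h2 := b.measurePreserving_repr
    have h3 := EuclideanSpace.volume_preserving_symm_measurableEquiv_toLp (Fin 2)
    have h4 := volume_preserving_finTwoArrow ℝ
    exact ((h4.comp h3).comp h2).comp h1
  have hemb : MeasurableEmbedding Φ := by
    let e : E2 ≃ᵐ ℝ × ℝ :=
      ((Homeomorph.addRight (-A)).toMeasurableEquiv.trans
        (b.repr.toHomeomorph.toMeasurableEquiv)).trans
        ((MeasurableEquiv.toLp 2 (Fin 2 → ℝ)).symm.trans MeasurableEquiv.finTwoArrow)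
    exact e.measurableEmbedding
  -- values at the three points
  have hΦA : Φ A = ((0:ℝ), (0:ℝ)) := by
    rw [hΦval A, sub_self, inner_zero_left, inner_zero_left]
  have hΦB : Φ B = ((0:ℝ), l) := by
    rw [hΦval B, hBA, real_inner_smul_left, real_inner_smul_left, real_inner_comm nv u, hnvu,
      huu, mul_zero, mul_one]
  have hcA : c - A = d • u + w := by rw [hwdef]; abel
  have hΦc : Φ c = (r, d) := by
    rw [hΦval c, hcA, inner_add_left, inner_add_left, real_inner_smul_left,
      real_inner_smul_left, real_inner_comm nv u, hnvu, huu, mul_zero, mul_one, zero_add]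
    have : ⟪w, nv⟫ = (r:ℝ) := by
      rw [hnvdef, real_inner_smul_right, real_inner_self_eq_norm_sq, hw]
      field_simp
    have hwu' : ⟪w, u⟫ = (0:ℝ) := hwu
    rw [this, hwu', add_zero]
  -- the planar function
  set g : ℝ × ℝ → ℝ := fun z =>
    if z.1 = r then k
    else (1 - z.1/r) * sideFun A B f ((z.2 - d/r*z.1)/(1 - z.1/r)) + k/r*z.1 with hgdef
  have hTE : ∀ p, triExt A B c r k f p = g (Φ p) := by
    intro p
    rw [hΦval p, hgdef]
    rfl
  -- transfer the integral
  have hImgPts : Φ '' ({A, B, c} : Set E2) = {((0:ℝ),(0:ℝ)), ((0:ℝ),l), (r,d)} := by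
    rw [Set.image_insert_eq, Set.image_insert_eq, Set.image_singleton, hΦA, hΦB, hΦc]
  have hAff : ∃ F : E2 →ᵃ[ℝ] ℝ × ℝ, ⇑F = Φ := by
    refine ⟨AffineMap.mk' Φ
      (LinearMap.prod ((innerSL ℝ nv).toLinearMap) ((innerSL ℝ u).toLinearMap)) A ?_, ?_⟩
    · intro p
      rw [hΦval p, hΦA]
      simp only [LinearMap.prod_apply, Function.prod, ContinuousLinearMap.coe_coe, innerSL_apply_apply,
        vsub_eq_sub, vadd_eq_add, add_zero, Prod.mk_add_mk]
      rw [real_inner_comm nv, real_inner_comm u]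
    · exact AffineMap.coe_mk' _ _ _ _
  have hImg : Φ '' (convexHull ℝ {A, B, c})
      = convexHull ℝ {((0:ℝ),(0:ℝ)), ((0:ℝ),l), (r,d)} := by
    obtain ⟨F, hF⟩ := hAff
    rw [← hF, F.image_convexHull, hF, hImgPts]
  have htrans : ∫ p in convexHull ℝ {A, B, c}, (triExt A B c r k f p)^2
      = ∫ z in convexHull ℝ {((0:ℝ),(0:ℝ)), ((0:ℝ),l), (r,d)}, (g z)^2 := by
    rw [← hImg, hmp.setIntegral_image_emb hemb (fun z => (g z)^2) _]
    apply integral_congr_ae (ae_of_all _ ?_)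
    intro p
    rw [hTE p]
  rw [htrans]
  -- apply the planar bound
  have hmem : ∀ t ∈ Set.Icc (0:ℝ) l, A + t • u ∈ segment ℝ A B := by
    intro t ht
    rw [segment_eq_image' ℝ A B]
    refine ⟨t / l, ⟨div_nonneg ht.1 hl.le, (div_le_one hl).2 ht.2⟩, ?_⟩
    show A + (t/l) • (B - A) = A + t • u
    rw [hBA, smul_smul, div_mul_cancel₀ _ hl.ne']
  have hφc : ContinuousOn (sideFun A B f) (Set.Icc 0 l) := by
    have e1 : sideFun A B f = f ∘ (fun t : ℝ => A + t • u) := rfl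
    rw [e1]
    exact hf_cont.comp ((continuous_const.add (continuous_id.smul continuous_const)).continuousOn)
      (fun t ht => hmem t ht)
  have hφ0 : ∀ t ∈ Set.Icc (0:ℝ) l, 0 ≤ sideFun A B f t := fun t ht => hf_nonneg _ (hmem t ht)
  exact planar_bound l d r k hl hr hk (sideFun A B f) hφc hφ0

end Side

/-- Let `P` be a convex compact polygon with vertices `v 0, …, v (n-1)`
and inscribed circle of center `c` and radius `r > 0` tangent to every side.  If
`f : ∂P → ℝ` is continuous, nonnegative and `H¹` on each side (with weak derivatives
`D i` on side `i`), and `k ≥ 0`, then `∫_{∂P} f² dμ ≤ (4/r)·∫_P F² dxdy`, where both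
integrals are computed sidewise resp. trianglewise (`P` being the union of the triangles
`Δ_i = conv{v i, v (i+1), c}` and `∂P` the union of the sides). -/
theorem polygon_boundary_L2_bound (n : ℕ) [NeZero n] (hn : 3 ≤ n) (v : Fin n → E2) (c : E2)
    (r : ℝ) (hr : 0 < r)
    (hside : ∀ i : Fin n, v i ≠ v (i + 1))
    (hball : Metric.closedBall c r ⊆ convexHull ℝ (Set.range v))
    (hbdry : frontier (convexHull ℝ (Set.range v)) = ⋃ i, segment ℝ (v i) (v (i + 1)))
    (hfoot : ∀ i : Fin n, ‖c - v i - footd (v i) (v (i + 1)) c • uvec (v i) (v (i + 1))‖ = r)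
    (htang : ∀ i : Fin n, ∃ p ∈ segment ℝ (v i) (v (i + 1)), dist c p = r)
    (f : E2 → ℝ)
    (hf_cont : ContinuousOn f (⋃ i, segment ℝ (v i) (v (i + 1))))
    (hf_nonneg : ∀ p ∈ ⋃ i, segment ℝ (v i) (v (i + 1)), 0 ≤ f p)
    (D : Fin n → ℝ → ℝ)
    (hH1 : ∀ i : Fin n, ∀ t ∈ Set.Icc (0 : ℝ) (dist (v i) (v (i + 1))),
      sideFun (v i) (v (i + 1)) f t
        = sideFun (v i) (v (i + 1)) f 0 + ∫ s in (0 : ℝ)..t, D i s)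
    (hD2 : ∀ i : Fin n,
      MemLp (D i) 2 (volume.restrict (Set.Ioc (0 : ℝ) (dist (v i) (v (i + 1))))))
    (k : ℝ) (hk : 0 ≤ k) :
    ∑ i : Fin n, ∫ t in (0 : ℝ)..dist (v i) (v (i + 1)), (sideFun (v i) (v (i + 1)) f t) ^ 2
      ≤ 4 / r * ∑ i : Fin n,
          ∫ p in convexHull ℝ {v i, v (i + 1), c}, (triExt (v i) (v (i + 1)) c r k f p) ^ 2 := by
  rw [Finset.mul_sum]
  apply Finset.sum_le_sum
  intro i _
  have hsub : segment ℝ (v i) (v (i + 1)) ⊆ ⋃ j, segment ℝ (v j) (v (j + 1)) :=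
    Set.subset_iUnion (fun j => segment ℝ (v j) (v (j + 1))) i
  have key := side_bound (v i) (v (i + 1)) c r k hr (hside i) (hfoot i) f
    (hf_cont.mono hsub) (fun p hp => hf_nonneg p (hsub hp)) hk
  set C := ∫ t in (0:ℝ)..dist (v i) (v (i + 1)), (sideFun (v i) (v (i + 1)) f t) ^ 2 with hC
  set I := ∫ p in convexHull ℝ {v i, v (i + 1), c}, (triExt (v i) (v (i + 1)) c r k f p) ^ 2
    with hI
  have h1 : C = 4 / r * (r / 4 * C) := by field_simp
  rw [h1]
  exact mul_le_mul_of_nonneg_left key (by positivity)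
end

section
/- If f : ∂P → ℝ is continuous, nonnegative, and H¹ on each side of P, and 0 ≤ k ≤ (∫_{∂P} f dμ)/|∂P|, then ∫_P |F(x,y)| dxdy ≤ (r/2)·∫_{∂P} f dμ. -/
open MeasureTheory
open scoped RealInnerProductSpace

section Aux

open Set

lemma seg_param_mem {A B : E2} (hAB : A ≠ B) {t : ℝ} (ht : t ∈ Set.Icc 0 (dist A B)) :
    A + t • uvec A B ∈ segment ℝ A B := by
  have hl : (0:ℝ) < dist A B := dist_pos.2 hAB
  refine ⟨1 - t / dist A B, t / dist A B, by
    rw [sub_nonneg]; exact div_le_one_of_le₀ ht.2 hl.le,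
    div_nonneg ht.1 hl.le, by ring, ?_⟩
  rw [uvec, smul_smul, div_eq_mul_inv]
  module

lemma sideFun_contOn {A B : E2} (hAB : A ≠ B) {f : E2 → ℝ}
    (hf : ContinuousOn f (segment ℝ A B)) :
    ContinuousOn (sideFun A B f) (Set.Icc 0 (dist A B)) := by
  have hline : ContinuousOn (fun t : ℝ => A + t • uvec A B) (Set.Icc 0 (dist A B)) :=
    (continuous_const.add (continuous_id.smul continuous_const)).continuousOn
  have := hf.comp hline (fun t ht => seg_param_mem hAB ht)
  exact this

lemma poly_integral (r C k : ℝ) (hr : 0 < r) :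
    ∫ s in (0:ℝ)..r, (1 - s/r) * ((1 - s/r) * C + k/r * s) = r/3 * C + k*r/6 := by
  have hcong : ∀ s ∈ Set.uIcc (0:ℝ) r, (1 - s/r) * ((1 - s/r) * C + k/r * s)
      = C + (k/r - 2*C/r) * s + (C/r^2 - k/r^2) * s^2 := by
    intro s _; field_simp; ring
  rw [intervalIntegral.integral_congr hcong]
  have h1 : IntervalIntegrable (fun s : ℝ => C + (k/r - 2*C/r) * s) volume 0 r :=
    (continuous_const.add (continuous_const.mul continuous_id)).intervalIntegrable _ _
  have h2 : IntervalIntegrable (fun s : ℝ => (C/r^2 - k/r^2) * s^2) volume 0 r :=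
    (continuous_const.mul (continuous_pow 2)).intervalIntegrable _ _
  have h3 : IntervalIntegrable (fun _ : ℝ => C) volume 0 r := intervalIntegrable_const
  have h4 : IntervalIntegrable (fun s : ℝ => (k/r - 2*C/r) * s) volume 0 r :=
    (continuous_const.mul continuous_id).intervalIntegrable _ _
  rw [intervalIntegral.integral_add h1 h2, intervalIntegral.integral_add h3 h4,
    intervalIntegral.integral_const, intervalIntegral.integral_const_mul,
    intervalIntegral.integral_const_mul, integral_id, integral_pow]
  field_simp
  ring

lemma triExt_formula (A B c : E2) (r k : ℝ) (f : E2 → ℝ) (p : E2) (nv : E2)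
    (hnv : nv = r⁻¹ • (c - A - footd A B c • uvec A B))
    (X Y : ℝ) (hX : ⟪p - A, uvec A B⟫ = X) (hY : ⟪p - A, nv⟫ = Y) (hYr : Y ≠ r) :
    triExt A B c r k f p
      = (1 - Y/r) * f (A + ((X - (footd A B c / r) * Y)/(1 - Y/r)) • uvec A B) + (k/r) * Y := by
  subst hnv hX hY
  simp only [triExt, if_neg hYr]

end Aux

section Tri

open Set

set_option maxHeartbeats 1000000 in
lemma tri_integral (A B c : E2) (r k : ℝ) (hr : 0 < r) (hAB : A ≠ B)
    (hfoot : ‖c - A - footd A B c • uvec A B‖ = r)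
    (f : E2 → ℝ) (hf_cont : ContinuousOn f (segment ℝ A B))
    (hf_nonneg : ∀ p ∈ segment ℝ A B, 0 ≤ f p) (hk0 : 0 ≤ k) :
    ∫ p in convexHull ℝ {A, B, c}, |triExt A B c r k f p|
      = r/3 * (∫ t in (0:ℝ)..dist A B, sideFun A B f t) + k*r/6 * dist A B := by
  set l : ℝ := dist A B with hl
  have hl0 : (0:ℝ) < l := dist_pos.2 hAB
  set u : E2 := uvec A B with hu
  set d : ℝ := footd A B c with hd
  set nv : E2 := r⁻¹ • (c - A - d • u) with hnv
  clear_value l u d nv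
  -- basic geometry
  have hBA' : B - A = l • u := by
    rw [hu, uvec, ← hl, smul_smul, mul_inv_cancel₀ hl0.ne', one_smul]
  have hBA : B = A + l • u := by rw [← hBA']; abel
  have hnorm_u : ‖u‖ = 1 := by
    rw [hu, uvec, ← hl, norm_smul, Real.norm_eq_abs, abs_of_nonneg (inv_nonneg.2 hl0.le),
      ← dist_eq_norm', ← hl]
    exact inv_mul_cancel₀ hl0.ne'
  have hinner_uu : ⟪u, u⟫ = 1 := by
    rw [real_inner_self_eq_norm_mul_norm, hnorm_u]; norm_num
  have hinner_uca : ⟪u, c - A⟫ = d := by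
    rw [hd, footd, real_inner_comm, hu]
  have hw0 : ⟪u, c - A - d • u⟫ = 0 := by
    rw [inner_sub_right, real_inner_smul_right, hinner_uca, hinner_uu]; ring
  have hinner_unv : ⟪u, nv⟫ = 0 := by
    rw [hnv, real_inner_smul_right, hw0, mul_zero]
  have hinner_nvu : ⟪nv, u⟫ = 0 := by rw [real_inner_comm]; exact hinner_unv
  have hnorm_nv : ‖nv‖ = 1 := by
    rw [hnv, norm_smul, Real.norm_eq_abs, abs_of_nonneg (inv_nonneg.2 hr.le), hfoot]
    exact inv_mul_cancel₀ hr.ne'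
  have hinner_nvnv : ⟪nv, nv⟫ = 1 := by
    rw [real_inner_self_eq_norm_mul_norm, hnorm_nv]; norm_num
  have hrnv : r • nv = c - A - d • u := by
    rw [hnv, smul_smul, mul_inv_cancel₀ hr.ne', one_smul]
  have hCA' : c - A = d • u + r • nv := by rw [hrnv]; abel
  have hCA : c = A + (d • u + r • nv) := by rw [← hCA']; abel
  have hinner_nvca : ⟪nv, c - A⟫ = r := by
    rw [hCA', inner_add_right, real_inner_smul_right, real_inner_smul_right,
      hinner_nvu, hinner_nvnv]; ring
  -- orthonormal basis
  have hon : Orthonormal ℝ ![u, nv] := by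
    rw [orthonormal_iff_ite]
    intro i j
    fin_cases i <;> fin_cases j <;>
      simp [hinner_uu, hinner_unv, hinner_nvu, hinner_nvnv, hnorm_u, hnorm_nv]
  have hcard : Fintype.card (Fin 2) = Module.finrank ℝ E2 := by simp
  have hli := hon.linearIndependent
  have hsp : ⊤ ≤ Submodule.span ℝ (Set.range ![u, nv]) := by
    rw [← coe_basisOfLinearIndependentOfCardEqFinrank hli hcard]
    exact (basisOfLinearIndependentOfCardEqFinrank hli hcard).span_eq.ge
  set b : OrthonormalBasis (Fin 2) ℝ E2 := OrthonormalBasis.mk hon hsp with hbdef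
  have hb0 : b 0 = u := by rw [hbdef, OrthonormalBasis.coe_mk]; rfl
  have hb1 : b 1 = nv := by rw [hbdef, OrthonormalBasis.coe_mk]; rfl
  -- coordinate functionals
  set c0 : E2 →L[ℝ] ℝ := innerSL ℝ u with hc0def
  set c1 : E2 →L[ℝ] ℝ := innerSL ℝ nv with hc1def
  have hc0app : ∀ w : E2, c0 w = ⟪u, w⟫ := fun w => rfl
  have hc1app : ∀ w : E2, c1 w = ⟪nv, w⟫ := fun w => rfl
  have hc0cont : Continuous fun w : E2 => c0 w := c0.continuous
  have hc1cont : Continuous fun w : E2 => c1 w := c1.continuous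
  have hcoord0 : ∀ w : E2, b.repr w 0 = c0 w := fun w => by
    rw [OrthonormalBasis.repr_apply_apply, hb0, hc0app]
  have hcoord1 : ∀ w : E2, b.repr w 1 = c1 w := fun w => by
    rw [OrthonormalBasis.repr_apply_apply, hb1, hc1app]
  have hdecomp : ∀ w : E2, c0 w • u + c1 w • nv = w := by
    intro w
    have := b.sum_repr w
    rw [Fin.sum_univ_two, hb0, hb1, hcoord0, hcoord1] at this
    exact this
  clear_value b c0 c1
  -- the parametrization and its domain
  set Ψ : E2 → E2 := fun w => A + (((1 - c1 w / r) * c0 w + (d/r) * c1 w) • u + c1 w • nv)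
    with hΨdef
  set S : Set E2 := {w | c0 w ∈ Ioo (0:ℝ) l ∧ c1 w ∈ Ioo (0:ℝ) r} with hSdef
  have hSmeas : MeasurableSet S := by
    exact ((c0.continuous.measurable measurableSet_Ioo).inter
      (c1.continuous.measurable measurableSet_Ioo))
  have key : ∀ t a : ℝ, A + (((1-a)*t + d*a) • u + (a*r) • nv) = (1-a) • (A + t • u) + a • c := by
    intro t a; rw [hCA]; module
  -- derivative of the parametrization
  set ψ' : E2 → (E2 →L[ℝ] E2) := fun w =>
    ((1 - c1 w / r) • c0 + ((d - c0 w)/r) • c1).smulRight u + c1.smulRight nv with hψdef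
  have hder : ∀ w : E2, HasFDerivAt Ψ (ψ' w) w := by
    intro w
    have h0 : HasFDerivAt (fun y : E2 => c0 y) c0 w := c0.hasFDerivAt
    have h1 : HasFDerivAt (fun y : E2 => c1 y) c1 w := c1.hasFDerivAt
    have hsc : HasFDerivAt (fun y : E2 => 1 - c1 y * r⁻¹) (-(r⁻¹ • c1)) w :=
      (h1.mul_const r⁻¹).const_sub 1
    have hmul : HasFDerivAt (fun y : E2 => (1 - c1 y * r⁻¹) * c0 y)
        ((1 - c1 w * r⁻¹) • c0 + c0 w • -(r⁻¹ • c1)) w := hsc.mul h0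
    have hfull : HasFDerivAt (fun y : E2 => (1 - c1 y * r⁻¹) * c0 y + (d/r) * c1 y)
        (((1 - c1 w * r⁻¹) • c0 + c0 w • -(r⁻¹ • c1)) + (d/r) • c1) w :=
      hmul.add (h1.const_mul (d/r))
    have hvec : HasFDerivAt
        (fun y : E2 => A + (((1 - c1 y * r⁻¹) * c0 y + (d/r) * c1 y) • u + c1 y • nv))
        (((((1 - c1 w * r⁻¹) • c0 + c0 w • -(r⁻¹ • c1)) + (d/r) • c1).smulRight u
          + c1.smulRight nv)) w :=
      ((hfull.smul_const u).add (h1.smul_const nv)).const_add A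
    have heqD : ((((1 - c1 w * r⁻¹) • c0 + c0 w • -(r⁻¹ • c1)) + (d/r) • c1).smulRight u
          + c1.smulRight nv) = ψ' w := by
      rw [hψdef]
      refine ContinuousLinearMap.ext fun a => ?_
      simp only [ContinuousLinearMap.add_apply, ContinuousLinearMap.smulRight_apply,
        ContinuousLinearMap.smul_apply, ContinuousLinearMap.neg_apply, smul_eq_mul]
      match_scalars
      · field_simp; ring
      · ring
    rw [← heqD]
    have hΨeq : Ψ = fun y : E2 =>
        A + (((1 - c1 y * r⁻¹) * c0 y + (d/r) * c1 y) • u + c1 y • nv) := by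
      rw [hΨdef]; funext y; rw [div_eq_mul_inv]
    rw [hΨeq]
    exact hvec
  -- determinant
  have hdet : ∀ w : E2, (ψ' w).det = 1 - c1 w / r := by
    intro w
    have hM : LinearMap.toMatrix b.toBasis b.toBasis (ψ' w : E2 →ₗ[ℝ] E2)
        = !![1 - c1 w / r, (d - c0 w)/r; 0, 1] := by
      ext i j
      fin_cases i <;> fin_cases j <;>
        simp [LinearMap.toMatrix_apply, OrthonormalBasis.coe_toBasis,
          OrthonormalBasis.coe_toBasis_repr_apply, OrthonormalBasis.repr_apply_apply,
          hψdef, hb0, hb1, ContinuousLinearMap.smulRight_apply,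
          ContinuousLinearMap.add_apply, ContinuousLinearMap.smul_apply,
          ContinuousLinearMap.coe_coe, hc0app, hc1app,
          inner_add_right, real_inner_smul_right,
          hinner_uu, hinner_unv, hinner_nvu, hinner_nvnv, hnorm_u, hnorm_nv]
    have hdm := LinearMap.det_toMatrix b.toBasis (ψ' w : E2 →ₗ[ℝ] E2)
    rw [hM, Matrix.det_fin_two_of] at hdm
    rw [show (ψ' w).det = LinearMap.det (ψ' w : E2 →ₗ[ℝ] E2) from rfl, ← hdm]
    ring
  -- injectivity
  have hPA : ∀ w : E2, Ψ w - A = ((1 - c1 w / r) * c0 w + (d/r) * c1 w) • u + c1 w • nv := by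
    intro w
    rw [hΨdef]
    exact add_sub_cancel_left _ _
  have hXval : ∀ w : E2, ⟪Ψ w - A, u⟫ = (1 - c1 w / r) * c0 w + (d/r) * c1 w := by
    intro w
    rw [hPA w, real_inner_comm, inner_add_right, real_inner_smul_right, real_inner_smul_right,
      hinner_uu, hinner_unv]
    ring
  have hYval : ∀ w : E2, ⟪Ψ w - A, nv⟫ = c1 w := by
    intro w
    rw [hPA w, real_inner_comm, inner_add_right, real_inner_smul_right, real_inner_smul_right,
      hinner_nvu, hinner_nvnv]
    ring
  have hinj : Set.InjOn Ψ S := by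
    intro w hw w' hw' heq
    have e1 : c1 w = c1 w' := by rw [← hYval w, ← hYval w', heq]
    have e2 : (1 - c1 w / r) * c0 w + (d/r) * c1 w
        = (1 - c1 w' / r) * c0 w' + (d/r) * c1 w' := by
      rw [← hXval w, ← hXval w', heq]
    rw [← e1] at e2
    have hne : (1 - c1 w / r) ≠ 0 :=
      ne_of_gt (sub_pos.2 ((div_lt_one hr).2 hw.2.2))
    have e3 : c0 w = c0 w' := mul_left_cancel₀ hne (by linarith)
    rw [← hdecomp w, ← hdecomp w', e1, e3]
  -- pointwise evaluation of the integrand on S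
  have habs : ∀ w ∈ S, |(ψ' w).det| • |triExt A B c r k f (Ψ w)|
      = (1 - c1 w / r) * ((1 - c1 w / r) * f (A + c0 w • u) + k/r * c1 w) := by
    intro w hw
    obtain ⟨⟨ht0, htl⟩, hs0, hsr⟩ := hw
    have h1r : (0:ℝ) < 1 - c1 w / r := sub_pos.2 ((div_lt_one hr).2 hsr)
    have hYne : c1 w ≠ r := ne_of_lt hsr
    have harg : ((1 - c1 w / r) * c0 w + d / r * c1 w - d / r * c1 w) / (1 - c1 w / r)
        = c0 w := by
      rw [add_sub_cancel_right]
      exact mul_div_cancel_left₀ _ (ne_of_gt h1r)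
    have hTE : triExt A B c r k f (Ψ w)
        = (1 - c1 w / r) * f (A + c0 w • u) + (k/r) * c1 w := by
      have h := triExt_formula A B c r k f (Ψ w) nv
        (by rw [← hd, ← hu]; exact hnv)
        ((1 - c1 w / r) * c0 w + (d/r) * c1 w) (c1 w)
        (by rw [← hu]; exact hXval w) (hYval w) hYne
      rw [h, ← hd, ← hu, harg]
    have hfnn : 0 ≤ f (A + c0 w • u) := by
      refine hf_nonneg _ ?_
      have hmem := seg_param_mem hAB (show c0 w ∈ Icc 0 (dist A B) by
        rw [← hl]; exact ⟨ht0.le, htl.le⟩)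
      rw [← hu] at hmem
      exact hmem
    have hval : 0 ≤ (1 - c1 w / r) * f (A + c0 w • u) + (k/r) * c1 w := by
      have h2 := mul_nonneg h1r.le hfnn
      have h3 := mul_nonneg (div_nonneg hk0 hr.le) hs0.le
      linarith
    rw [hdet w, hTE, abs_of_pos h1r, abs_of_nonneg hval, smul_eq_mul]
  -- the image of S fills the triangle up to null sets
  have hsegsub : segment ℝ A B ⊆ convexHull ℝ ({A, B, c} : Set E2) := by
    have hA : A ∈ convexHull ℝ ({A,B,c} : Set E2) := subset_convexHull ℝ _ (by simp)
    have hB : B ∈ convexHull ℝ ({A,B,c} : Set E2) := subset_convexHull ℝ _ (by simp)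
    exact (convex_convexHull ℝ _).segment_subset hA hB
  have hcmem : c ∈ convexHull ℝ ({A,B,c} : Set E2) := subset_convexHull ℝ _ (by simp)
  have hΨim : ∀ w : E2, Ψ w = (1 - c1 w / r) • (A + c0 w • u) + (c1 w / r) • c := by
    intro w
    have hk2 := key (c0 w) (c1 w / r)
    rw [div_mul_cancel₀ _ hr.ne'] at hk2
    rw [hΨdef]
    simp only []
    rw [← hk2]
    congr 2
    ring
  have himsub : Ψ '' S ⊆ convexHull ℝ ({A,B,c} : Set E2) := by
    rintro _ ⟨w, hw, rfl⟩
    obtain ⟨⟨ht0, htl⟩, hs0, hsr⟩ := hw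
    rw [hΨim w]
    have hmem := seg_param_mem hAB (show c0 w ∈ Icc 0 (dist A B) by
      rw [← hl]; exact ⟨ht0.le, htl.le⟩)
    rw [← hu] at hmem
    refine (convex_convexHull ℝ _) (hsegsub hmem) hcmem ?_ ?_ (by ring)
    · have := (div_lt_one hr).2 hsr; linarith
    · exact div_nonneg hs0.le hr.le
  -- affine independence and the interior
  have haff : AffineIndependent ℝ ![A, B, c] := by
    rw [affineIndependent_iff_not_collinear]
    intro hcol
    have hA : A ∈ Set.range ![A,B,c] := ⟨0, rfl⟩
    rw [collinear_iff_of_mem hA] at hcol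
    obtain ⟨vv, hvv⟩ := hcol
    obtain ⟨tB, htB⟩ := hvv B ⟨1, rfl⟩
    obtain ⟨tc, htc⟩ := hvv c ⟨2, rfl⟩
    rw [vadd_eq_add] at htB htc
    have htB' : tB • vv = l • u := by
      rw [← hBA', htB]
      abel
    have htB0 : tB ≠ 0 := by
      intro h0
      rw [h0, zero_smul] at htB'
      have h1 := congrArg (fun z : E2 => ‖z‖) htB'
      simp only [norm_zero, norm_smul, Real.norm_eq_abs, hnorm_u, mul_one,
        abs_of_pos hl0] at h1
      exact hl0.ne h1
    have hca2 : c - A = (tc/tB) • (l • u) := by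
      rw [← htB', smul_smul, div_mul_cancel₀ _ htB0, htc]
      abel
    have hr0 : (r:ℝ) = 0 := by
      rw [← hinner_nvca, hca2, real_inner_smul_right, real_inner_smul_right, hinner_nvu]
      ring
    exact hr.ne' hr0
  have htop : affineSpan ℝ (Set.range ![A,B,c]) = ⊤ :=
    haff.affineSpan_eq_top_iff_card_eq_finrank_add_one.2 (by simp)
  set ab : AffineBasis (Fin 3) ℝ E2 := ⟨![A,B,c], haff, htop⟩ with habdef
  have habcoe : ⇑ab = ![A,B,c] := rfl
  clear_value ab
  have hrange : Set.range ![A,B,c] = ({A, B, c} : Set E2) := by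
    ext p
    simp only [Set.mem_range, Set.mem_insert_iff, Set.mem_singleton_iff]
    constructor
    · rintro ⟨i, rfl⟩; fin_cases i <;> simp
    · rintro (rfl | rfl | rfl)
      exacts [⟨0, rfl⟩, ⟨1, rfl⟩, ⟨2, rfl⟩]
  have hint : interior (convexHull ℝ ({A,B,c} : Set E2)) ⊆ Ψ '' S := by
    intro x hx
    rw [← hrange, ← habcoe, ab.interior_convexHull] at hx
    set α : Fin 3 → ℝ := fun i => ab.coord i x with hα
    have hpos : ∀ i, 0 < α i := hx
    have hsum : α 0 + α 1 + α 2 = 1 := by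
      have := ab.sum_coord_apply_eq_one x
      rwa [Fin.sum_univ_three] at this
    have hcomb : α 0 • A + α 1 • B + α 2 • c = x := by
      have h1 := ab.affineCombination_coord_eq_self x
      rw [Finset.affineCombination_eq_linear_combination _ _ _
        (by rw [Fin.sum_univ_three]; exact hsum)] at h1
      rw [Fin.sum_univ_three] at h1
      simpa [habcoe] using h1
    have h01 : (0:ℝ) < α 0 + α 1 := by have := hpos 0; have := hpos 1; linarith
    set t0 : ℝ := (α 1 * l)/(α 0 + α 1) with ht0def
    set w : E2 := t0 • u + (α 2 * r) • nv with hwdef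
    have hc0w : c0 w = t0 := by
      rw [hwdef, hc0app, inner_add_right, real_inner_smul_right, real_inner_smul_right,
        hinner_uu, hinner_unv]
      ring
    have hc1w : c1 w = α 2 * r := by
      rw [hwdef, hc1app, inner_add_right, real_inner_smul_right, real_inner_smul_right,
        hinner_nvu, hinner_nvnv]
      ring
    have hα2 : α 2 < 1 := by have := hpos 0; have := hpos 1; linarith
    have ht0pos : 0 < t0 := div_pos (mul_pos (hpos 1) hl0) h01
    have ht0lt : t0 < l := by
      rw [ht0def, div_lt_iff₀ h01]
      have h5 : α 1 < α 0 + α 1 := by linarith [hpos 0]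
      calc α 1 * l < (α 0 + α 1) * l := mul_lt_mul_of_pos_right h5 hl0
        _ = l * (α 0 + α 1) := by ring
    clear_value α t0 w
    refine ⟨w, ⟨?_, ?_⟩, ?_⟩
    · rw [hc0w]; exact ⟨ht0pos, ht0lt⟩
    · rw [hc1w]
      exact ⟨mul_pos (hpos 2) hr, mul_lt_of_lt_one_left hr hα2⟩
    · have hstep : Ψ w = (1 - α 2) • (A + t0 • u) + α 2 • c := by
        have hk2 := key t0 (α 2)
        rw [hΨdef]
        simp only []
        rw [hc0w, hc1w,
          show (1 - α 2 * r / r) * t0 + d / r * (α 2 * r) = (1 - α 2) * t0 + d * α 2 by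
            field_simp]
        exact hk2
      rw [hstep, ← hcomb, hBA]
      have h1a : 1 - α 2 = α 0 + α 1 := by linarith
      have h2a : (1 - α 2) * t0 = α 1 * l := by
        rw [h1a, ht0def, mul_div_cancel₀ _ h01.ne']
      match_scalars
      · linear_combination (-1 : ℝ) * hsum
      · linear_combination h2a
      · ring
  -- null boundary and a.e. identification of the triangle with the image of S
  set T : Set E2 := convexHull ℝ ({A,B,c} : Set E2) with hTdef
  have hTconv : Convex ℝ T := convex_convexHull ℝ _
  have hTclosed : IsClosed T :=
    ((Set.toFinite ({A,B,c} : Set E2)).isCompact_convexHull ℝ).isClosed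
  have hfront : volume (frontier T) = 0 := hTconv.addHaar_frontier volume
  have haeeq : T =ᵐ[volume] (Ψ '' S) := by
    rw [MeasureTheory.ae_eq_set]
    constructor
    · refine measure_mono_null ?_ hfront
      intro x hx
      rw [hTclosed.frontier_eq]
      exact ⟨hx.1, fun hi => hx.2 (hint hi)⟩
    · rw [Set.diff_eq_empty.2 himsub]
      exact measure_empty
  have hrestr : volume.restrict T = volume.restrict (Ψ '' S) :=
    Measure.restrict_congr_set haeeq
  have hCoV := integral_image_eq_integral_abs_det_fderiv_smul volume hSmeas
      (fun w _ => (hder w).hasFDerivWithinAt) hinj (fun p => |triExt A B c r k f p|)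
  -- coordinates and Fubini
  set EQ : E2 ≃ᵐ ℝ × ℝ :=
    ((MeasurableEquiv.toLp 2 (Fin 2 → ℝ)).symm.trans MeasurableEquiv.finTwoArrow) with hEQdef
  have hEQmp : MeasurePreserving EQ volume volume :=
    (volume_preserving_finTwoArrow ℝ).comp
      (EuclideanSpace.volume_preserving_symm_measurableEquiv_toLp (Fin 2))
  have hQEmp : MeasurePreserving (fun w : E2 => EQ (b.repr w)) volume volume :=
    hEQmp.comp b.measurePreserving_repr
  have hQEemb : MeasurableEmbedding (fun w : E2 => EQ (b.repr w)) :=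
    EQ.measurableEmbedding.comp b.measurableEquiv.measurableEmbedding
  have hQEapp : ∀ w : E2, EQ (b.repr w) = (c0 w, c1 w) := by
    intro w
    have h0 : EQ (b.repr w) = (b.repr w 0, b.repr w 1) := rfl
    rw [h0, hcoord0, hcoord1]
  have hSpre : S = (fun w : E2 => EQ (b.repr w)) ⁻¹' (Ioo (0:ℝ) l ×ˢ Ioo (0:ℝ) r) := by
    ext w
    simp only [hSdef, Set.mem_setOf_eq, Set.mem_preimage, hQEapp w, Set.mem_prod]
  set G2 : ℝ × ℝ → ℝ :=
    fun q => (1 - q.2/r) * ((1 - q.2/r) * sideFun A B f q.1 + k/r * q.2) with hG2def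
  have hg0 : ∀ w : E2, (1 - c1 w / r) * ((1 - c1 w / r) * f (A + c0 w • u) + k/r * c1 w)
      = G2 (EQ (b.repr w)) := by
    intro w
    rw [hQEapp w, hG2def]
    simp only [sideFun]
    rw [← hu]
  have hstep2 : (∫ w in S, (1 - c1 w / r) * ((1 - c1 w / r) * f (A + c0 w • u) + k/r * c1 w))
      = ∫ q in Ioo (0:ℝ) l ×ˢ Ioo (0:ℝ) r, G2 q := by
    simp only [hg0]
    rw [hSpre]
    exact hQEmp.setIntegral_preimage_emb hQEemb G2 _
  have hsfc : ContinuousOn (sideFun A B f) (Icc (0:ℝ) l) := by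
    rw [hl]; exact sideFun_contOn hAB hf_cont
  have hG2cont : ContinuousOn G2 (Icc (0:ℝ) l ×ˢ Icc (0:ℝ) r) := by
    have h1 : ContinuousOn (fun q : ℝ × ℝ => sideFun A B f q.1)
        (Icc (0:ℝ) l ×ˢ Icc (0:ℝ) r) :=
      hsfc.comp continuous_fst.continuousOn (fun q hq => hq.1)
    have h2 : Continuous (fun q : ℝ × ℝ => 1 - q.2/r) :=
      continuous_const.sub (continuous_snd.div_const r)
    have h3 : Continuous (fun q : ℝ × ℝ => k/r * q.2) := continuous_const.mul continuous_snd
    rw [hG2def]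
    exact h2.continuousOn.mul ((h2.continuousOn.mul h1).add h3.continuousOn)
  have hG2int : IntegrableOn G2 (Ioo (0:ℝ) l ×ˢ Ioo (0:ℝ) r) volume :=
    (hG2cont.integrableOn_compact (isCompact_Icc.prod isCompact_Icc)).mono_set
      (Set.prod_mono Set.Ioo_subset_Icc_self Set.Ioo_subset_Icc_self)
  have hfub : (∫ q in Ioo (0:ℝ) l ×ˢ Ioo (0:ℝ) r, G2 q)
      = ∫ t in Ioo (0:ℝ) l, ∫ s' in Ioo (0:ℝ) r, G2 (t, s') := by
    rw [Measure.volume_eq_prod]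
    exact setIntegral_prod G2 (by rwa [← Measure.volume_eq_prod])
  have hinner2 : ∀ t : ℝ, (∫ s' in Ioo (0:ℝ) r, G2 (t, s'))
      = r/3 * sideFun A B f t + k*r/6 := by
    intro t
    rw [← MeasureTheory.integral_Ioc_eq_integral_Ioo, ← intervalIntegral.integral_of_le hr.le]
    exact poly_integral r (sideFun A B f t) k hr
  have hsfint : IntegrableOn (sideFun A B f) (Ioo (0:ℝ) l) volume :=
    (hsfc.integrableOn_compact isCompact_Icc).mono_set Set.Ioo_subset_Icc_self
  have houter : (∫ t in Ioo (0:ℝ) l, (r/3 * sideFun A B f t + k*r/6))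
      = r/3 * (∫ t in (0:ℝ)..l, sideFun A B f t) + k*r/6 * l := by
    rw [MeasureTheory.integral_add (hsfint.const_mul (r/3))
      (integrableOn_const measure_Ioo_lt_top.ne),
      integral_const_mul, setIntegral_const,
      Real.volume_real_Ioo_of_le hl0.le, sub_zero, smul_eq_mul,
      intervalIntegral.integral_of_le hl0.le, MeasureTheory.integral_Ioc_eq_integral_Ioo]
    ring
  calc ∫ p in T, |triExt A B c r k f p|
      = ∫ p in Ψ '' S, |triExt A B c r k f p| := by rw [hrestr]
    _ = ∫ w in S, |(ψ' w).det| • |triExt A B c r k f (Ψ w)| := hCoV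
    _ = ∫ w in S, (1 - c1 w / r) * ((1 - c1 w / r) * f (A + c0 w • u) + k/r * c1 w) :=
        setIntegral_congr_fun hSmeas (fun w hw => habs w hw)
    _ = ∫ q in Ioo (0:ℝ) l ×ˢ Ioo (0:ℝ) r, G2 q := hstep2
    _ = ∫ t in Ioo (0:ℝ) l, ∫ s' in Ioo (0:ℝ) r, G2 (t, s') := hfub
    _ = ∫ t in Ioo (0:ℝ) l, (r/3 * sideFun A B f t + k*r/6) := by simp only [hinner2]
    _ = r/3 * (∫ t in (0:ℝ)..l, sideFun A B f t) + k*r/6 * l := houter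

end Tri

/-- Let `P` be a convex compact polygon with vertices `v 0, …, v (n-1)`
and inscribed circle of center `c` and radius `r > 0` tangent to every side.  If
`f : ∂P → ℝ` is continuous, nonnegative and `H¹` on each side, and
`0 ≤ k ≤ (∫_{∂P} f dμ)/|∂P|`, then `∫_P |F| dxdy ≤ (r/2)·∫_{∂P} f dμ`, where the
integrals are computed sidewise resp. trianglewise. -/
theorem polygon_L1_extension_bound (n : ℕ) [NeZero n] (hn : 3 ≤ n) (v : Fin n → E2)
    (c : E2) (r : ℝ) (hr : 0 < r)
    (hside : ∀ i : Fin n, v i ≠ v (i + 1))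
    (hball : Metric.closedBall c r ⊆ convexHull ℝ (Set.range v))
    (hbdry : frontier (convexHull ℝ (Set.range v)) = ⋃ i, segment ℝ (v i) (v (i + 1)))
    (hfoot : ∀ i : Fin n, ‖c - v i - footd (v i) (v (i + 1)) c • uvec (v i) (v (i + 1))‖ = r)
    (htang : ∀ i : Fin n, ∃ p ∈ segment ℝ (v i) (v (i + 1)), dist c p = r)
    (f : E2 → ℝ)
    (hf_cont : ContinuousOn f (⋃ i, segment ℝ (v i) (v (i + 1))))
    (hf_nonneg : ∀ p ∈ ⋃ i, segment ℝ (v i) (v (i + 1)), 0 ≤ f p)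
    (D : Fin n → ℝ → ℝ)
    (hH1 : ∀ i : Fin n, ∀ t ∈ Set.Icc (0 : ℝ) (dist (v i) (v (i + 1))),
      sideFun (v i) (v (i + 1)) f t
        = sideFun (v i) (v (i + 1)) f 0 + ∫ s in (0 : ℝ)..t, D i s)
    (hD2 : ∀ i : Fin n,
      MemLp (D i) 2 (volume.restrict (Set.Ioc (0 : ℝ) (dist (v i) (v (i + 1))))))
    (k : ℝ) (hk0 : 0 ≤ k)
    (hk : k ≤ (∑ i : Fin n, ∫ t in (0 : ℝ)..dist (v i) (v (i + 1)), sideFun (v i) (v (i + 1)) f t)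
            / ∑ i : Fin n, dist (v i) (v (i + 1))) :
    ∑ i : Fin n, ∫ p in convexHull ℝ {v i, v (i + 1), c}, |triExt (v i) (v (i + 1)) c r k f p|
      ≤ r / 2 * ∑ i : Fin n, ∫ t in (0 : ℝ)..dist (v i) (v (i + 1)), sideFun (v i) (v (i + 1)) f t := by
  have hseg : ∀ i : Fin n, segment ℝ (v i) (v (i+1)) ⊆ ⋃ j, segment ℝ (v j) (v (j+1)) :=
    fun i => Set.subset_iUnion (fun j => segment ℝ (v j) (v (j+1))) i
  have htri : ∀ i : Fin n,
      ∫ p in convexHull ℝ {v i, v (i+1), c}, |triExt (v i) (v (i+1)) c r k f p|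
        = r/3 * (∫ t in (0:ℝ)..dist (v i) (v (i+1)), sideFun (v i) (v (i+1)) f t)
          + k*r/6 * dist (v i) (v (i+1)) :=
    fun i => tri_integral _ _ _ _ _ hr (hside i) (hfoot i) f (hf_cont.mono (hseg i))
      (fun p hp => hf_nonneg p (hseg i hp)) hk0
  set Sf := ∑ i : Fin n, ∫ t in (0:ℝ)..dist (v i) (v (i+1)), sideFun (v i) (v (i+1)) f t with hSf
  set L := ∑ i : Fin n, dist (v i) (v (i+1)) with hLdef
  have hSi : ∀ i : Fin n, 0 ≤ ∫ t in (0:ℝ)..dist (v i) (v (i+1)), sideFun (v i) (v (i+1)) f t :=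
    fun i => intervalIntegral.integral_nonneg dist_nonneg
      (fun t ht => hf_nonneg _ (hseg i (seg_param_mem (hside i) ht)))
  have hS0 : 0 ≤ Sf := Finset.sum_nonneg fun i _ => hSi i
  have hL0 : 0 < L := Finset.sum_pos (fun i _ => dist_pos.2 (hside i))
    ⟨⟨0, Nat.pos_of_ne_zero (NeZero.ne n)⟩, Finset.mem_univ _⟩
  have hkL : k * L ≤ Sf := (le_div_iff₀ hL0).1 hk
  calc ∑ i : Fin n, ∫ p in convexHull ℝ {v i, v (i+1), c}, |triExt (v i) (v (i+1)) c r k f p|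
      = ∑ i : Fin n, (r/3 * (∫ t in (0:ℝ)..dist (v i) (v (i+1)), sideFun (v i) (v (i+1)) f t)
          + k*r/6 * dist (v i) (v (i+1))) := Finset.sum_congr rfl fun i _ => htri i
    _ = r/3 * Sf + k*r/6 * L := by
        rw [Finset.sum_add_distrib, ← Finset.mul_sum, ← Finset.mul_sum]
    _ ≤ r/2 * Sf := by nlinarith [mul_le_mul_of_nonneg_right hkL hr.le]
end
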